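/- arXiv:2101.03519 — 2 statements merged into one kernel-verified Lean document; each statement's English description precedes it below -/
import Mathlib

section
/- Let P_0 be a simple path in G and let G_3 be the graph obtained from G by deleting all edges of P_0. If the contiguous subpath (P_0)_{i,j} (0 ≤ i < j < |P_0|) is a separator path, then among the vertices (P_0)_i, …, (P_0)_j, all those with odd index belong to one connected component C_o of G_3 and all those with even index belong to a different connected component C_e of G_3. Conversely, if for 0 ≤ i < j < |P_0| all vertices of odd index among (P_0)_i, …, (P_0)_j lie in one connected component C_o of G_3 and all vertices of even index lie in a different connected component C_e of G_3, and no contiguous subpath (P_0)_{x,y} with 0 ≤ x < y < |P_0| that properly contains (P_0)_{i,j} satisfies the same condition, then (P_0)_{i,j} is a separator path. -/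
open SimpleGraph

namespace NSP

variable {V : Type*}

/-- A chordal graph: every cycle with at least four vertices has a chord,
i.e. an edge not on the cycle joining two vertices of the cycle. -/
def Chordal (G : SimpleGraph V) : Prop :=
  ∀ ⦃v : V⦄ (c : G.Walk v v), c.IsCycle → 4 ≤ c.length →
    ∃ u w : V, u ∈ c.support ∧ w ∈ c.support ∧ G.Adj u w ∧ s(u, w) ∉ c.edges

/-- A path in `G`, given as a nonempty list of vertices with consecutive
vertices adjacent. -/
def IsPathSeq (G : SimpleGraph V) (p : List V) : Prop :=
  p ≠ [] ∧ p.Chain' G.Adj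

/-- A simple path: a path all of whose vertices are distinct. -/
def IsSimpleSeq (G : SimpleGraph V) (p : List V) : Prop :=
  IsPathSeq G p ∧ p.Nodup

/-- The set of edges of a path sequence. -/
def edgesOf (p : List V) : Set (Sym2 V) :=
  {e | ∃ (i : ℕ) (h : i + 1 < p.length),
    e = s(p.get ⟨i, by omega⟩, p.get ⟨i + 1, h⟩)}

/-- A set of edges is separating if deleting it from `G` leaves a
disconnected graph. -/
def Separating (G : SimpleGraph V) (D : Set (Sym2 V)) : Prop :=
  ¬ (G.deleteEdges D).Connected

/-- A path is separating if its edge set is separating. -/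
def SeparatingPath (G : SimpleGraph V) (p : List V) : Prop :=
  Separating G (edgesOf p)

/-- The contiguous subpath `p_{i,j} = p_i → ⋯ → p_j`. -/
def subseq (p : List V) (i j : ℕ) : List V :=
  (p.take (j + 1)).drop i

/-- `q` is a contiguous subpath of `p`. -/
def ContigSub (q p : List V) : Prop :=
  ∃ i j : ℕ, i ≤ j ∧ j < p.length ∧ q = subseq p i j

/-- A separator path: a simple separating path that does not properly contain
(as a contiguous subpath) a separating path. -/
def SeparatorPath (G : SimpleGraph V) (p : List V) : Prop :=
  IsSimpleSeq G p ∧ SeparatingPath G p ∧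
    ∀ q : List V, ContigSub q p → q ≠ p → ¬ SeparatingPath G q

/-- `u` and `v` are weakly `p`-connected: some path between `u` and `v`
shares no edge with `p`. -/
def WeaklyConn (G : SimpleGraph V) (p : List V) (u v : V) : Prop :=
  ∃ q : List V, IsPathSeq G q ∧ q.head? = some u ∧ q.getLast? = some v ∧
    edgesOf q ∩ edgesOf p = ∅

/-- `u` and `v` are strongly `p`-connected: some path between `u` and `v`
shares no edge with `p` and, except at its endpoints, no vertex with `p`. -/
def StronglyConn (G : SimpleGraph V) (p : List V) (u v : V) : Prop :=
  ∃ q : List V, IsPathSeq G q ∧ q.head? = some u ∧ q.getLast? = some v ∧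
    edgesOf q ∩ edgesOf p = ∅ ∧
    ∀ (i : ℕ) (h : i < q.length), 0 < i → i + 1 < q.length → q.get ⟨i, h⟩ ∉ p

/-- A path `r` is traversable if some simple path from `S` to `T` contains
`r` as a contiguous subpath. -/
def Traversable (G : SimpleGraph V) (S T : V) (r : List V) : Prop :=
  ∃ p : List V, IsSimpleSeq G p ∧ p.head? = some S ∧ p.getLast? = some T ∧
    ContigSub r p

/-- A bad vertex: the middle vertex of a traversable separator path with
exactly two edges. -/
def BadVertex (G : SimpleGraph V) (S T : V) (v : V) : Prop :=
  ∃ r : List V, SeparatorPath G r ∧ Traversable G S T r ∧ r.length = 3 ∧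
    r[1]? = some v

/-- A separator path is useful if each two-edge segment is shorter than the
corresponding chord. -/
def Useful (w : Sym2 V → ℝ) (r : List V) : Prop :=
  ∀ (i : ℕ) (h : i + 2 < r.length),
    w s(r.get ⟨i, by omega⟩, r.get ⟨i + 1, by omega⟩) +
      w s(r.get ⟨i + 1, by omega⟩, r.get ⟨i + 2, h⟩) <
      w s(r.get ⟨i, by omega⟩, r.get ⟨i + 2, h⟩)

/-- A normal separator path: traversable, useful, and with more than two
edges (i.e. at least four vertices). -/
def NormalSep (G : SimpleGraph V) (w : Sym2 V → ℝ) (S T : V) (r : List V) : Prop :=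
  SeparatorPath G r ∧ Traversable G S T r ∧ Useful w r ∧ 3 < r.length

/-- `v` is an inner vertex of `r` (a vertex of `r` other than its endpoints). -/
def InnerMem (r : List V) (v : V) : Prop :=
  ∃ (i : ℕ) (h : i < r.length), 0 < i ∧ i + 1 < r.length ∧ r.get ⟨i, h⟩ = v

/-- The total length of a path with respect to edge lengths `w`. -/
def pathLength (w : Sym2 V → ℝ) (p : List V) : ℝ :=
  ((p.zip p.tail).map fun q => w s(q.1, q.2)).sum

/-- All edges of `G` have positive length. -/
def EdgePos (G : SimpleGraph V) (w : Sym2 V → ℝ) : Prop :=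
  ∀ e ∈ G.edgeSet, 0 < w e

/-- The subgraph of `G` formed by the edges of `D` together with their
endpoints. -/
def edgeSubgraph (G : SimpleGraph V) (D : Set (Sym2 V)) : G.Subgraph where
  verts := {v | ∃ e ∈ D ∩ G.edgeSet, v ∈ e}
  Adj u v := s(u, v) ∈ D ∧ G.Adj u v
  adj_sub h := h.2
  edge_vert {v w} h := ⟨s(v, w), ⟨h.1, h.2⟩, Sym2.mem_mk_left v w⟩
  symm := ⟨fun u v h => by
    obtain ⟨h1, h2⟩ := h
    exact ⟨by rwa [Sym2.eq_swap], h2.symm⟩⟩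


section Infra


variable {V : Type*} {G : SimpleGraph V}

/-- A walk of length one between `x` and `y` has `s(x,y)` among its edges. -/
lemma edge_mem_of_length_eq_one {x y : V} (Q : G.Walk x y) (h : Q.length = 1) :
    s(x, y) ∈ Q.edges := by
  cases Q with
  | nil => simp at h
  | cons hadj q =>
    have : q.length = 0 := by simpa using h
    have := q.eq_of_length_eq_zero this
    subst this
    simp

/-- Helper: append of paths with single intersection point is a path. -/
lemma isPath_append {u v w : V} {p : G.Walk u v} {q : G.Walk v w}
    (hp : p.IsPath) (hq : q.IsPath)
    (h : ∀ a, a ∈ p.support → a ∈ q.support → a = v) : (p.append q).IsPath := by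
  rw [Walk.isPath_def, Walk.support_append]
  apply List.Nodup.append hp.support_nodup
  · have := hq.support_nodup
    rw [q.support_eq_cons] at this
    exact this.of_cons
  · intro a ha ha'
    have hmem : a ∈ q.support := by
      rw [q.support_eq_cons]; exact List.mem_cons_of_mem _ ha'
    have hav : a = v := h a ha hmem
    subst hav
    have := hq.support_nodup
    rw [q.support_eq_cons] at this
    exact (List.nodup_cons.mp this).1 ha'

/-- Shortcut lemma: a walk with a "chord" (an adjacency between two of its support
vertices whose edge is unused) can be strictly shortened, using only old vertices
plus the chord edge. -/
lemma shortcut {u v x y : V} (W : G.Walk u v)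
    (hx : x ∈ W.support) (hy : y ∈ W.support) (hadj : G.Adj x y)
    (hne : s(x, y) ∉ W.edges) :
    ∃ W' : G.Walk u v, (∀ z ∈ W'.support, z ∈ W.support) ∧
      (∀ e ∈ W'.edges, e ∈ W.edges ∨ e = s(x, y)) ∧ W'.length < W.length := by
  classical
  have hspec := W.take_spec hx
  have hysplit : y ∈ (W.takeUntil x hx).support ∨ y ∈ (W.dropUntil x hx).support := by
    rw [← Walk.mem_support_append_iff, hspec]; exact hy
  have hlen : (W.takeUntil x hx).length + (W.dropUntil x hx).length = W.length := by
    have := congrArg Walk.length hspec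
    rwa [Walk.length_append] at this
  rcases hysplit with hyt | hyd
  · -- y occurs in the part before x : go u → y, edge y-x, then x → v
    set A := W.takeUntil x hx with hA
    set B := W.dropUntil x hx with hB
    have hspec2 := A.take_spec hyt
    have hlen2 : (A.takeUntil y hyt).length + (A.dropUntil y hyt).length = A.length := by
      have := congrArg Walk.length hspec2
      rwa [Walk.length_append] at this
    refine ⟨(A.takeUntil y hyt).append (Walk.cons hadj.symm B), ?_, ?_, ?_⟩
    · intro z hz
      rw [Walk.mem_support_append_iff] at hz
      rcases hz with hz | hz
      · exact W.support_takeUntil_subset hx (A.support_takeUntil_subset hyt hz)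
      · rw [Walk.support_cons] at hz
        rcases List.mem_cons.mp hz with rfl | hz
        · exact W.support_takeUntil_subset hx hyt
        · exact W.support_dropUntil_subset hx hz
    · intro e he
      rw [Walk.edges_append, List.mem_append] at he
      rcases he with he | he
      · exact Or.inl (W.edges_takeUntil_subset hx (A.edges_takeUntil_subset hyt he))
      · rw [Walk.edges_cons] at he
        rcases List.mem_cons.mp he with rfl | he
        · right; exact Sym2.eq_swap
        · exact Or.inl (W.edges_dropUntil_subset hx he)
    · rw [Walk.length_append, Walk.length_cons]
      -- need (A.takeUntil y).length + (1 + B.length) < W.length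
      have hd2 : 2 ≤ (A.dropUntil y hyt).length := by
        by_contra hcon
        push_neg at hcon
        interval_cases h : (A.dropUntil y hyt).length
        · exact hadj.ne' ((A.dropUntil y hyt).eq_of_length_eq_zero h)
        · have : s(y, x) ∈ (A.dropUntil y hyt).edges :=
            edge_mem_of_length_eq_one _ h
          have : s(y, x) ∈ W.edges :=
            W.edges_takeUntil_subset hx (A.edges_dropUntil_subset hyt this)
          rw [Sym2.eq_swap] at this
          exact hne this
      omega
  · -- y occurs after x: go u → x, edge x-y, then y → v
    set B := W.dropUntil x hx with hB
    have hspec2 := B.take_spec hyd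
    have hlen2 : (B.takeUntil y hyd).length + (B.dropUntil y hyd).length = B.length := by
      have := congrArg Walk.length hspec2
      rwa [Walk.length_append] at this
    refine ⟨(W.takeUntil x hx).append (Walk.cons hadj (B.dropUntil y hyd)), ?_, ?_, ?_⟩
    · intro z hz
      rw [Walk.mem_support_append_iff] at hz
      rcases hz with hz | hz
      · exact W.support_takeUntil_subset hx hz
      · rw [Walk.support_cons] at hz
        rcases List.mem_cons.mp hz with rfl | hz
        · exact W.support_dropUntil_subset hx (Walk.start_mem_support _)
        · exact W.support_dropUntil_subset hx (B.support_dropUntil_subset hyd hz)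
    · intro e he
      rw [Walk.edges_append, List.mem_append] at he
      rcases he with he | he
      · exact Or.inl (W.edges_takeUntil_subset hx he)
      · rw [Walk.edges_cons] at he
        rcases List.mem_cons.mp he with rfl | he
        · right; rfl
        · exact Or.inl (W.edges_dropUntil_subset hx (B.edges_dropUntil_subset hyd he))
    · rw [Walk.length_append, Walk.length_cons]
      have hd2 : 2 ≤ (B.takeUntil y hyd).length := by
        by_contra hcon
        push_neg at hcon
        interval_cases h : (B.takeUntil y hyd).length
        · exact hadj.ne ((B.takeUntil y hyd).eq_of_length_eq_zero h)
        · have : s(x, y) ∈ (B.takeUntil y hyd).edges :=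
            edge_mem_of_length_eq_one _ h
          have : s(x, y) ∈ W.edges :=
            W.edges_dropUntil_subset hx (B.edges_takeUntil_subset hyd this)
          exact hne this
      omega


variable {V : Type*} {G : SimpleGraph V}

/-- Extract a connecting walk between two support vertices, with edge containment,
strictly shorter unless the two vertices are the endpoints of the walk. -/
lemma seg {u v x y : V} (W : G.Walk u v) (hx : x ∈ W.support) (hy : y ∈ W.support) :
    ∃ Z : G.Walk x y, (∀ e ∈ Z.edges, e ∈ W.edges) ∧
      (Z.length < W.length ∨ (x = u ∧ y = v) ∨ (x = v ∧ y = u)) := by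
  classical
  have hspec := W.take_spec hx
  have hlen : (W.takeUntil x hx).length + (W.dropUntil x hx).length = W.length := by
    have := congrArg Walk.length hspec; rwa [Walk.length_append] at this
  have hysplit : y ∈ (W.takeUntil x hx).support ∨ y ∈ (W.dropUntil x hx).support := by
    rw [← Walk.mem_support_append_iff, hspec]; exact hy
  rcases hysplit with hyt | hyd
  · set A := W.takeUntil x hx with hA
    have hlen2 : (A.takeUntil y hyt).length + (A.dropUntil y hyt).length = A.length := by
      have := congrArg Walk.length (A.take_spec hyt); rwa [Walk.length_append] at this
    refine ⟨(A.dropUntil y hyt).reverse, ?_, ?_⟩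
    · intro e he
      rw [Walk.edges_reverse, List.mem_reverse] at he
      exact W.edges_takeUntil_subset hx (A.edges_dropUntil_subset hyt he)
    · rw [Walk.length_reverse]
      by_cases hstrict : (A.dropUntil y hyt).length < W.length
      · exact Or.inl hstrict
      · push_neg at hstrict
        have h1 : (A.takeUntil y hyt).length = 0 := by omega
        have h2 : (W.dropUntil x hx).length = 0 := by omega
        right; right
        exact ⟨(W.dropUntil x hx).eq_of_length_eq_zero h2,
          ((A.takeUntil y hyt).eq_of_length_eq_zero h1).symm⟩
  · set B := W.dropUntil x hx with hB
    have hlen2 : (B.takeUntil y hyd).length + (B.dropUntil y hyd).length = B.length := by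
      have := congrArg Walk.length (B.take_spec hyd); rwa [Walk.length_append] at this
    refine ⟨B.takeUntil y hyd, ?_, ?_⟩
    · intro e he
      exact W.edges_dropUntil_subset hx (B.edges_takeUntil_subset hyd he)
    · by_cases hstrict : (B.takeUntil y hyd).length < W.length
      · exact Or.inl hstrict
      · push_neg at hstrict
        have h1 : (W.takeUntil x hx).length = 0 := by omega
        have h2 : (B.dropUntil y hyd).length = 0 := by omega
        right; left
        exact ⟨((W.takeUntil x hx).eq_of_length_eq_zero h1).symm,
          (B.dropUntil y hyd).eq_of_length_eq_zero h2⟩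

/-- From a `G`-walk avoiding `D`, reachability in `G.deleteEdges D`. -/
lemma reachable_deleteEdges_of_walk {D : Set (Sym2 V)} {u v : V}
    (W : G.Walk u v) (h : ∀ e ∈ W.edges, e ∉ D) :
    (G.deleteEdges D).Reachable u v :=
  ⟨W.toDeleteEdges D h⟩

/-- From reachability in `G.deleteEdges D`, a `G`-walk avoiding `D`. -/
lemma walk_of_reachable_deleteEdges {D : Set (Sym2 V)} {u v : V}
    (h : (G.deleteEdges D).Reachable u v) :
    ∃ W : G.Walk u v, ∀ e ∈ W.edges, e ∉ D := by
  obtain ⟨W0⟩ := h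
  refine ⟨W0.transfer G ?_, ?_⟩
  · intro e he
    have := W0.edges_subset_edgeSet he
    rw [edgeSet_deleteEdges] at this
    exact this.1
  · intro e he
    rw [Walk.edges_transfer] at he
    have := W0.edges_subset_edgeSet he
    rw [edgeSet_deleteEdges] at this
    exact this.2

/-- Every vertex of a walk avoiding `D` is reachable from the start in `G.deleteEdges D`. -/
lemma reachable_of_mem_support_avoid {D : Set (Sym2 V)} {u v z : V}
    (W : G.Walk u v) (h : ∀ e ∈ W.edges, e ∉ D) (hz : z ∈ W.support) :
    (G.deleteEdges D).Reachable u z := by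
  classical
  exact reachable_deleteEdges_of_walk (W.takeUntil z hz)
    (fun e he => h e (W.edges_takeUntil_subset hz he))

/-- Patching lemma: if the endpoints of every additionally deleted edge remain
reachable, reachability is preserved. -/
lemma patch {D D' : Set (Sym2 V)} (hsub : D' ⊆ D)
    (h : ∀ a b : V, G.Adj a b → s(a, b) ∈ D → s(a, b) ∉ D' →
      (G.deleteEdges D).Reachable a b)
    {u v : V} (hr : (G.deleteEdges D').Reachable u v) :
    (G.deleteEdges D).Reachable u v := by
  obtain ⟨W, hW⟩ := walk_of_reachable_deleteEdges hr
  clear hr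
  revert hW
  induction W with
  | nil => exact fun _ => Reachable.refl _
  | @cons a b c hadj rest ih =>
    intro hW
    have hW' : ∀ e ∈ rest.edges, e ∉ D' := fun e he => hW e (by simp [he])
    have hab : s(a, b) ∉ D' := hW s(a, b) (by simp)
    have step : (G.deleteEdges D).Reachable a b := by
      by_cases hD : s(a, b) ∈ D
      · exact h a b hadj hD hab
      · exact Adj.reachable (by rw [deleteEdges_adj]; exact ⟨hadj, hD⟩)
    exact step.trans (ih hW')

lemma patch_connected {D D' : Set (Sym2 V)} (hsub : D' ⊆ D)
    (h : ∀ a b : V, G.Adj a b → s(a, b) ∈ D → s(a, b) ∉ D' →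
      (G.deleteEdges D).Reachable a b)
    (hc : (G.deleteEdges D').Connected) : (G.deleteEdges D).Connected := by
  rw [connected_iff] at hc ⊢
  exact ⟨fun u v => patch hsub h (hc.1 u v), hc.2⟩

/-- Two-class classification along a walk in a less-deleted graph. -/
lemma classify {D D' : Set (Sym2 V)} {a b : V}
    (h : ∀ x y : V, G.Adj x y → s(x, y) ∈ D → s(x, y) ∉ D' →
      (x = a ∧ y = b) ∨ (x = b ∧ y = a))
    {u v : V} (hr : (G.deleteEdges D').Reachable u v)
    (hv : (G.deleteEdges D).Reachable v a ∨ (G.deleteEdges D).Reachable v b) :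
    (G.deleteEdges D).Reachable u a ∨ (G.deleteEdges D).Reachable u b := by
  obtain ⟨W, hW⟩ := walk_of_reachable_deleteEdges hr
  clear hr
  revert hW
  induction W with
  | nil => exact fun _ => hv
  | @cons x y c hadj rest ih =>
    intro hW
    have hW' : ∀ e ∈ rest.edges, e ∉ D' := fun e he => hW e (by simp [he])
    have hxy : s(x, y) ∉ D' := hW s(x, y) (by simp)
    have hyside := ih hv hW'
    by_cases hD : s(x, y) ∈ D
    · rcases h x y hadj hD hxy with ⟨rfl, rfl⟩ | ⟨rfl, rfl⟩
      · exact Or.inl (Reachable.refl _)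
      · exact Or.inr (Reachable.refl _)
    · have hstep : (G.deleteEdges D).Reachable x y :=
        Adj.reachable (by rw [deleteEdges_adj]; exact ⟨hadj, hD⟩)
      rcases hyside with hy | hy
      · exact Or.inl (hstep.trans hy)
      · exact Or.inr (hstep.trans hy)


variable {V : Type*} {G : SimpleGraph V}





section Lists

variable (P0 : List V)

/-- Total version of list indexing. -/
def gv (hne : P0 ≠ []) (k : ℕ) : V := P0.getD k (P0.head hne)

variable (hne : P0 ≠ [])

lemma gv_eq_get {k : ℕ} (h : k < P0.length) : gv P0 hne k = P0.get ⟨k, h⟩ := by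
  simp [gv, List.getD_eq_getElem?_getD, List.getElem?_eq_getElem h]

lemma length_subseq {i j : ℕ} (hj : j < P0.length) :
    (subseq P0 i j).length = j + 1 - i := by
  simp [subseq]
  omega

lemma get_subseq {i j k : ℕ} (hj : j < P0.length) (hk : k < (subseq P0 i j).length) :
    (subseq P0 i j).get ⟨k, hk⟩ = gv P0 hne (i + k) := by
  have hlen : (subseq P0 i j).length = j + 1 - i := length_subseq P0 hj
  have hik : i + k < P0.length := by omega
  rw [gv_eq_get P0 hne hik]
  simp [subseq]

lemma subseq_sublist (i j : ℕ) : (subseq P0 i j).Sublist P0 :=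
  (List.drop_sublist _ _).trans (List.take_sublist _ _)

lemma mem_edgesOf_iff {q : List V} {e : Sym2 V} :
    e ∈ edgesOf q ↔ ∃ (s : ℕ) (h : s + 1 < q.length),
      e = s(q.get ⟨s, by omega⟩, q.get ⟨s + 1, h⟩) := Iff.rfl

lemma mem_edgesOf_iff' {e : Sym2 V} :
    e ∈ edgesOf P0 ↔ ∃ s : ℕ, s + 1 < P0.length ∧
      e = s(gv P0 hne s, gv P0 hne (s + 1)) := by
  rw [mem_edgesOf_iff]
  constructor
  · rintro ⟨s, h, rfl⟩
    exact ⟨s, h, by rw [gv_eq_get P0 hne (by omega : s < P0.length), gv_eq_get P0 hne h]⟩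
  · rintro ⟨s, h, rfl⟩
    exact ⟨s, h, by rw [gv_eq_get P0 hne (by omega : s < P0.length), gv_eq_get P0 hne h]⟩

lemma mem_edgesOf_subseq_iff {i j : ℕ} (hj : j < P0.length) (hij : i ≤ j) {e : Sym2 V} :
    e ∈ edgesOf (subseq P0 i j) ↔ ∃ s : ℕ, i ≤ s ∧ s < j ∧
      e = s(gv P0 hne s, gv P0 hne (s + 1)) := by
  have hlen : (subseq P0 i j).length = j + 1 - i := length_subseq P0 hj
  rw [mem_edgesOf_iff]
  constructor
  · rintro ⟨s, h, rfl⟩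
    refine ⟨i + s, by omega, by omega, ?_⟩
    rw [get_subseq P0 hne hj, get_subseq P0 hne hj]
    rw [show i + (s + 1) = i + s + 1 from rfl]
  · rintro ⟨s, hs1, hs2, rfl⟩
    have hb : s - i + 1 < (subseq P0 i j).length := by omega
    refine ⟨s - i, hb, ?_⟩
    rw [get_subseq P0 hne hj, get_subseq P0 hne hj,
      show i + (s - i) = s by omega, show i + (s - i + 1) = s + 1 by omega]

lemma edgesOf_subseq_subset {i j : ℕ} (hj : j < P0.length) (hij : i ≤ j) :
    edgesOf (subseq P0 i j) ⊆ edgesOf P0 := by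
  have hne' : P0 ≠ [] := by intro h; rw [h] at hj; simp at hj
  intro e he
  rw [mem_edgesOf_subseq_iff P0 hne' hj hij] at he
  obtain ⟨s, hs1, hs2, rfl⟩ := he
  rw [mem_edgesOf_iff' P0 hne']
  exact ⟨s, by omega, rfl⟩

lemma gv_inj (hnd : P0.Nodup) {k l : ℕ} (hk : k < P0.length) (hl : l < P0.length)
    (h : gv P0 hne k = gv P0 hne l) : k = l := by
  rw [gv_eq_get P0 hne hk, gv_eq_get P0 hne hl] at h
  have := (List.Nodup.get_inj_iff hnd).mp h
  exact congrArg Fin.val this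

lemma adj_gv (hc : P0.Chain' G.Adj) {k : ℕ} (hk : k + 1 < P0.length) :
    G.Adj (gv P0 hne k) (gv P0 hne (k + 1)) := by
  rw [gv_eq_get P0 hne (by omega : k < P0.length), gv_eq_get P0 hne hk]
  have := List.isChain_iff_getElem.mp hc k (by omega)
  simpa using this

/-- Pinning down which edge of the path an edge equality identifies. -/
lemma edge_eq_cases (hnd : P0.Nodup) {a b s : ℕ} (ha : a < P0.length)
    (hb : b < P0.length) (hs : s + 1 < P0.length)
    (h : s(gv P0 hne a, gv P0 hne b) = s(gv P0 hne s, gv P0 hne (s + 1))) :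
    (a = s ∧ b = s + 1) ∨ (a = s + 1 ∧ b = s) := by
  rw [Sym2.eq_iff] at h
  rcases h with ⟨h1, h2⟩ | ⟨h1, h2⟩
  · exact Or.inl ⟨gv_inj P0 hne hnd ha (by omega) h1, gv_inj P0 hne hnd hb hs h2⟩
  · exact Or.inr ⟨gv_inj P0 hne hnd ha hs h1, gv_inj P0 hne hnd hb (by omega) h2⟩

/-- An edge of P0 incident to `gv k` must be `e (k-1)` or `e k`. -/
lemma mem_edgesOf_gv {k : ℕ} (hnd : P0.Nodup) (hk : k < P0.length) {w : V}
    (hmem : s(gv P0 hne k, w) ∈ edgesOf P0) :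
    (k + 1 < P0.length ∧ w = gv P0 hne (k + 1)) ∨ (1 ≤ k ∧ w = gv P0 hne (k - 1)) := by
  rw [mem_edgesOf_iff' P0 hne] at hmem
  obtain ⟨s, hs, heq⟩ := hmem
  rw [Sym2.eq_iff] at heq
  rcases heq with ⟨h1, h2⟩ | ⟨h1, h2⟩
  · have : k = s := gv_inj P0 hne hnd hk (by omega) h1
    subst this
    exact Or.inl ⟨hs, h2⟩
  · have : k = s + 1 := gv_inj P0 hne hnd hk hs h1
    subst this
    exact Or.inr ⟨by omega, by simpa using h2⟩

/-- Chord edges (index distance ≥ 2) are not edges of P0. -/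
lemma chord_not_mem (hnd : P0.Nodup) {a b : ℕ} (ha : a < P0.length) (hb : b < P0.length)
    (hab : a + 2 ≤ b) : s(gv P0 hne a, gv P0 hne b) ∉ edgesOf P0 := by
  intro hmem
  rw [mem_edgesOf_iff' P0 hne] at hmem
  obtain ⟨s, hs, heq⟩ := hmem
  rcases edge_eq_cases P0 hne hnd ha hb hs heq with ⟨h1, h2⟩ | ⟨h1, h2⟩ <;> omega

lemma gv_subseq {i j m : ℕ} (hj : j < P0.length) (hij : i ≤ j) (hm : m < j + 1 - i)
    (hne2 : subseq P0 i j ≠ []) :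
    gv (subseq P0 i j) hne2 m = gv P0 hne (i + m) := by
  have hlen1 : (subseq P0 i j).length = j + 1 - i := length_subseq P0 hj
  rw [gv_eq_get _ hne2 (by omega), get_subseq P0 hne hj]

lemma subseq_eq_subseq {i j a b : ℕ} (hj : j < P0.length) (hij : i ≤ j)
    (hab : a ≤ b) (hbij : b ≤ j - i) :
    subseq (subseq P0 i j) a b = subseq P0 (i + a) (i + b) := by
  have hne' : P0 ≠ [] := by intro h; rw [h] at hj; simp at hj
  have hlen1 : (subseq P0 i j).length = j + 1 - i := length_subseq P0 hj
  have hne2 : subseq P0 i j ≠ [] := by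
    intro hcon
    rw [hcon] at hlen1
    simp at hlen1
    omega
  apply List.ext_get
  · rw [length_subseq (subseq P0 i j) (by omega), length_subseq P0 (by omega : i + b < P0.length)]
    omega
  · intro k h1 h2
    rw [get_subseq (subseq P0 i j) hne2 (by omega : b < (subseq P0 i j).length),
      get_subseq P0 hne' (by omega : i + b < P0.length),
      gv_subseq P0 hne' hj hij (by
        have := length_subseq (subseq P0 i j) (show b < (subseq P0 i j).length by omega) (i := a)
        omega) hne2,
      show i + (a + k) = i + a + k by omega]

end Lists

variable {V : Type*} {G : SimpleGraph V}









/-- Main chordality consequence: if `x—y—z` with a connection from `x` to `z` inside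
a vertex class `S` avoiding `y`, and the only `G`-neighbours of `y` inside `S` are
`x` and `z`, then `x` and `z` are adjacent. -/
lemma chord_of_class {x y z : V} (hchordal : Chordal G)
    (S : Set V) (hadj1 : G.Adj x y) (hadj2 : G.Adj y z) (hxz : x ≠ z)
    (hyS : y ∉ S)
    (hedge : ∀ w ∈ S, G.Adj y w → w = x ∨ w = z)
    (hpath : ∃ W : G.Walk x z, ∀ a ∈ W.support, a ∈ S) :
    G.Adj x z := by
  obtain ⟨W0, hW0⟩ := hpath
  suffices key : ∀ N, ∀ W : G.Walk x z, (∀ a ∈ W.support, a ∈ S) → W.length = N →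
      G.Adj x z from key W0.length W0 hW0 rfl
  intro N
  induction N using Nat.strong_induction_on with
  | _ N ih =>
    intro W hWS hlen
    classical
    rcases Nat.lt_or_ge N 2 with h2 | h2
    · interval_cases N
      · exact absurd (W.eq_of_length_eq_zero hlen) hxz
      · exact W.adj_of_length_eq_one hlen
    -- replace W by its bypass (a path)
    by_cases hb : W.bypass.length < N
    · exact ih _ hb W.bypass (fun a ha => hWS a (W.support_bypass_subset ha)) rfl
    · push_neg at hb
      have hblen : W.bypass.length = N := le_antisymm (hlen ▸ W.length_bypass_le) hb
      set W' := W.bypass with hW'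
      have hW'path : W'.IsPath := Walk.bypass_isPath W
      have hW'S : ∀ a ∈ W'.support, a ∈ S :=
        fun a ha => hWS a (W.support_bypass_subset ha)
      have hzy : z ≠ y := fun h => hyS (h ▸ hW'S z W'.end_mem_support)
      have hxy : x ≠ y := fun h => hyS (h ▸ hW'S x W'.start_mem_support)
      -- the closing two-edge tail z — y
      have htail : (Walk.cons hadj2.symm Walk.nil : G.Walk z y).IsPath := by
        rw [Walk.cons_isPath_iff]
        constructor
        · exact Walk.IsPath.nil
        · simp [hzy]
      have hPbig : (W'.append (Walk.cons hadj2.symm Walk.nil)).IsPath := by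
        apply isPath_append hW'path htail
        intro a ha ha'
        simp only [Walk.support_cons, Walk.support_nil, List.mem_cons,
          List.not_mem_nil, or_false] at ha'
        rcases ha' with rfl | rfl
        · rfl
        · exact absurd (hW'S a ha) hyS
      set Pbig := W'.append (Walk.cons hadj2.symm Walk.nil) with hPbigdef
      have hyxedges : s(y, x) ∉ Pbig.edges := by
        rw [hPbigdef, Walk.edges_append]
        intro hmem
        rcases List.mem_append.mp hmem with hmem | hmem
        · exact hyS (hW'S y (W'.fst_mem_support_of_mem_edges hmem))
        · simp only [Walk.edges_cons, Walk.edges_nil] at hmem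
          rcases List.mem_singleton.mp hmem with hmem
          rw [Sym2.eq_iff] at hmem
          rcases hmem with ⟨h1, h2⟩ | ⟨h1, h2⟩
          · first | exact hzy h1.symm | exact hzy h1 | exact hxz h2 | exact hxz h2.symm
          · first | exact hzy h1.symm | exact hzy h1 | exact hxz h2 | exact hxz h2.symm
      have hcyc : (Walk.cons hadj1.symm Pbig).IsCycle := by
        rw [Walk.cons_isCycle_iff]
        exact ⟨hPbig, hyxedges⟩
      have hlenC : (Walk.cons hadj1.symm Pbig).length = N + 2 := by
        have h1 : Pbig.length = N + 1 := by
          rw [hPbigdef, Walk.length_append, hblen]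
          simp
        rw [Walk.length_cons, h1]
      obtain ⟨u, w, hu, hw, huw, hnotmem⟩ :=
        hchordal (Walk.cons hadj1.symm Pbig) hcyc (by omega)
      have hsupp : ∀ a, a ∈ (Walk.cons hadj1.symm Pbig).support → a = y ∨ a ∈ W'.support := by
        intro a ha
        rw [Walk.support_cons, hPbigdef, Walk.support_append] at ha
        rcases List.mem_cons.mp ha with rfl | ha
        · exact Or.inl rfl
        · rcases List.mem_append.mp ha with ha | ha
          · exact Or.inr ha
          · simp only [Walk.support_cons, Walk.support_nil, List.tail_cons,
              List.mem_singleton] at ha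
            exact Or.inl ha
      have hCedges : (Walk.cons hadj1.symm Pbig).edges = s(y, x) :: Pbig.edges :=
        Walk.edges_cons _ _
      have hedgecase : ∀ a, G.Adj y a → a ∈ W'.support →
          s(y, a) ∈ (Walk.cons hadj1.symm Pbig).edges := by
        intro a hya haW
        rcases hedge a (hW'S a haW) hya with rfl | rfl
        · rw [hCedges]; exact List.mem_cons_self
        · rw [hCedges]
          apply List.mem_cons_of_mem
          rw [hPbigdef, Walk.edges_append]
          apply List.mem_append.mpr
          right
          simp [Sym2.eq_swap]
      rcases hsupp u hu with rfl | huW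
      · -- u = y
        rcases hsupp w hw with rfl | hwW
        · exact absurd rfl huw.ne
        · exact absurd (hedgecase w huw hwW) hnotmem
      · rcases hsupp w hw with rfl | hwW
        · rw [Sym2.eq_swap] at hnotmem
          exact absurd (hedgecase u huw.symm huW) hnotmem
        · -- both in W' : shortcut
          have hnotW' : s(u, w) ∉ W'.edges := by
            intro hmem
            apply hnotmem
            rw [hCedges]
            apply List.mem_cons_of_mem
            rw [hPbigdef, Walk.edges_append]
            exact List.mem_append.mpr (Or.inl hmem)
          obtain ⟨W'', hsub, _, hlt⟩ := shortcut W' huW hwW huw hnotW'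
          exact ih W''.length (by omega) W'' (fun a ha => hW'S a (hsub a ha)) rfl


end Infra

section ClaimA

variable {V : Type*} {G : SimpleGraph V}

set_option maxHeartbeats 1600000 in
/-- Claim A: alternation. If the two end edges of the subpath cross and every vertex
is in the class of one of the first two vertices, then every edge of the subpath
crosses. -/
lemma claimA (hchordal : Chordal G) (P0 : List V) (hne : P0 ≠ [])
    (hc : P0.Chain' G.Adj) (hnd : P0.Nodup) (i j : ℕ) (hij : i < j) (hj : j < P0.length)
    (hcrossi : ¬ (G.deleteEdges (edgesOf (subseq P0 i j))).Reachable
      (gv P0 hne i) (gv P0 hne (i + 1)))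
    (hcrossj : ¬ (G.deleteEdges (edgesOf (subseq P0 i j))).Reachable
      (gv P0 hne (j - 1)) (gv P0 hne j))
    (htwo : ∀ v, (G.deleteEdges (edgesOf (subseq P0 i j))).Reachable v (gv P0 hne i) ∨
      (G.deleteEdges (edgesOf (subseq P0 i j))).Reachable v (gv P0 hne (i + 1)))
    {t : ℕ} (hit : i ≤ t) (htj : t < j) :
    ¬ (G.deleteEdges (edgesOf (subseq P0 i j))).Reachable (gv P0 hne t) (gv P0 hne (t + 1)) := by
  classical
  set p : ℕ → V := gv P0 hne with hp
  set D : Set (Sym2 V) := edgesOf (subseq P0 i j) with hD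
  set H : SimpleGraph V := G.deleteEdges D with hH
  have hDiff : ∀ e : Sym2 V, e ∈ D ↔ ∃ s : ℕ, i ≤ s ∧ s < j ∧ e = s(p s, p (s + 1)) :=
    fun e => mem_edgesOf_subseq_iff P0 hne hj (le_of_lt hij)
  have hpinj : ∀ {k l : ℕ}, k < P0.length → l < P0.length → p k = p l → k = l :=
    fun hk hl h => gv_inj P0 hne hnd hk hl h
  have hpadj : ∀ {k : ℕ}, k + 1 < P0.length → G.Adj (p k) (p (k + 1)) :=
    fun hk => adj_gv P0 hne hc hk
  -- main bad-tuple elimination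
  have noBad : ∀ N : ℕ, ¬ ∃ (c d c1 c2 d1 d2 : ℕ),
      (i ≤ c ∧ c + 1 < d ∧ d < j) ∧
      ((c1 = c ∧ c2 = c + 1) ∨ (c1 = c + 1 ∧ c2 = c)) ∧
      ((d1 = d ∧ d2 = d + 1) ∨ (d1 = d + 1 ∧ d2 = d)) ∧
      (∃ m, c < m ∧ m < d ∧ H.Reachable (p m) (p (m + 1))) ∧
      ¬ H.Reachable (p c1) (p c2) ∧
      ∃ (W1 : G.Walk (p c1) (p d1)) (W2 : G.Walk (p d2) (p c2)),
        (∀ a ∈ W1.support, H.Reachable (p c1) a) ∧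
        (∀ a ∈ W2.support, H.Reachable (p c2) a) ∧
        W1.length + W2.length = N := by
    intro N
    induction N using Nat.strong_induction_on with
    | _ N ih =>
      rintro ⟨c, d, c1, c2, d1, d2, ⟨hic, hcd, hdj⟩, horc, hord, ⟨m, hm1, hm2, hmre⟩,
        hcross, W1, W2, hS1, hS2, hlen⟩
      have hc1b : c1 < P0.length := by rcases horc with ⟨rfl, _⟩ | ⟨rfl, _⟩ <;> omega
      have hc2b : c2 < P0.length := by rcases horc with ⟨_, rfl⟩ | ⟨_, rfl⟩ <;> omega
      have hd1b : d1 < P0.length := by rcases hord with ⟨rfl, _⟩ | ⟨rfl, _⟩ <;> omega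
      have hd2b : d2 < P0.length := by rcases hord with ⟨_, rfl⟩ | ⟨_, rfl⟩ <;> omega
      have hc1le : c1 ≤ c + 1 := by rcases horc with ⟨rfl, _⟩ | ⟨rfl, _⟩ <;> omega
      have hc2le : c2 ≤ c + 1 := by rcases horc with ⟨_, rfl⟩ | ⟨_, rfl⟩ <;> omega
      have hd1ge : d ≤ d1 := by rcases hord with ⟨rfl, _⟩ | ⟨rfl, _⟩ <;> omega
      have hd2ge : d ≤ d2 := by rcases hord with ⟨_, rfl⟩ | ⟨_, rfl⟩ <;> omega
      have hdisj : ∀ a : V, H.Reachable (p c1) a → H.Reachable (p c2) a → False :=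
        fun a h1 h2 => hcross (h1.trans h2.symm)
      by_cases hbp : W1.bypass.length + W2.bypass.length < N
      · exact ih _ hbp ⟨c, d, c1, c2, d1, d2, ⟨hic, hcd, hdj⟩, horc, hord, ⟨m, hm1, hm2, hmre⟩,
          hcross, W1.bypass, W2.bypass,
          (fun a ha => hS1 a (W1.support_bypass_subset ha)),
          (fun a ha => hS2 a (W2.support_bypass_subset ha)), rfl⟩
      push_neg at hbp
      have hby1 := W1.length_bypass_le
      have hby2 := W2.length_bypass_le
      set Q1 := W1.bypass with hQ1
      set Q2 := W2.bypass with hQ2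
      have hQ1path : Q1.IsPath := W1.bypass_isPath
      have hQ2path : Q2.IsPath := W2.bypass_isPath
      have hSQ1 : ∀ a ∈ Q1.support, H.Reachable (p c1) a :=
        fun a ha => hS1 a (W1.support_bypass_subset ha)
      have hSQ2 : ∀ a ∈ Q2.support, H.Reachable (p c2) a :=
        fun a ha => hS2 a (W2.support_bypass_subset ha)
      have hlenQ : Q1.length + Q2.length = N := by omega
      have hQ1pos : 0 < Q1.length := by
        rcases Nat.eq_zero_or_pos Q1.length with h0 | h; swap; · exact h
        have h1 := Q1.eq_of_length_eq_zero h0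
        have := hpinj hc1b hd1b h1
        omega
      have hQ2pos : 0 < Q2.length := by
        rcases Nat.eq_zero_or_pos Q2.length with h0 | h; swap; · exact h
        have h1 := Q2.eq_of_length_eq_zero h0
        have := hpinj hd2b hc2b h1
        omega
      have hadjc : G.Adj (p c2) (p c1) := by
        rcases horc with ⟨rfl, rfl⟩ | ⟨rfl, rfl⟩
        · exact (hpadj (by omega)).symm
        · exact hpadj (by omega)
      have hadjd : G.Adj (p d1) (p d2) := by
        rcases hord with ⟨rfl, rfl⟩ | ⟨rfl, rfl⟩
        · exact hpadj (by omega)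
        · exact (hpadj (by omega)).symm
      have hd1notQ2 : (p d1) ∉ Q2.support := by
        intro hmem
        exact hdisj (p d1) (hSQ1 (p d1) Q1.end_mem_support) (hSQ2 (p d1) hmem)
      have hconsQ2 : (Walk.cons hadjd Q2).IsPath := by
        rw [Walk.cons_isPath_iff]
        exact ⟨hQ2path, hd1notQ2⟩
      have hPbig : (Q1.append (Walk.cons hadjd Q2)).IsPath := by
        apply isPath_append hQ1path hconsQ2
        intro a ha ha'
        rw [Walk.support_cons] at ha'
        rcases List.mem_cons.mp ha' with rfl | ha'
        · rfl
        · exact absurd (hdisj a (hSQ1 a ha) (hSQ2 a ha')) not_false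
      set Pbig := Q1.append (Walk.cons hadjd Q2) with hPbigdef
      have hc2notQ1 : (p c2) ∉ Q1.support := by
        intro hmem
        exact hdisj (p c2) (hSQ1 (p c2) hmem) (Reachable.refl _)
      have hc1notQ2 : (p c1) ∉ Q2.support := by
        intro hmem
        exact hdisj (p c1) (Reachable.refl _) (hSQ2 (p c1) hmem)
      have hne_cd : s(p c2, p c1) ≠ s(p d1, p d2) := by
        intro hmem
        rw [Sym2.eq_iff] at hmem
        rcases hmem with ⟨h1, h2⟩ | ⟨h1, h2⟩
        · have := hpinj hc2b hd1b h1; omega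
        · have := hpinj hc1b hd1b h2; omega
      have hclose : s(p c2, p c1) ∉ Pbig.edges := by
        rw [hPbigdef, Walk.edges_append]
        intro hmem
        rcases List.mem_append.mp hmem with hmem | hmem
        · exact hc2notQ1 (Q1.fst_mem_support_of_mem_edges hmem)
        · rw [Walk.edges_cons] at hmem
          rcases List.mem_cons.mp hmem with hmem | hmem
          · exact hne_cd hmem
          · exact hc1notQ2 (Q2.snd_mem_support_of_mem_edges hmem)
      have hcyc : (Walk.cons hadjc Pbig).IsCycle := by
        rw [Walk.cons_isCycle_iff]
        exact ⟨hPbig, hclose⟩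
      set C := Walk.cons hadjc Pbig with hCdef
      have hClen : C.length = N + 2 := by
        rw [hCdef, Walk.length_cons, hPbigdef, Walk.length_append, Walk.length_cons]
        omega
      have hCsupp : ∀ a, a ∈ C.support → a ∈ Q1.support ∨ a ∈ Q2.support := by
        intro a ha
        rw [hCdef, Walk.support_cons] at ha
        rcases List.mem_cons.mp ha with rfl | ha
        · exact Or.inr Q2.end_mem_support
        · rw [hPbigdef, Walk.support_append] at ha
          rcases List.mem_append.mp ha with ha | ha
          · exact Or.inl ha
          · rw [Walk.support_cons, List.tail_cons] at ha
            exact Or.inr ha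
      have hCedges : ∀ e : Sym2 V, (e ∈ Q1.edges ∨ e = s(p d1, p d2) ∨ e ∈ Q2.edges) →
          e ∈ C.edges := by
        intro e he
        rw [hCdef, Walk.edges_cons, hPbigdef, Walk.edges_append, Walk.edges_cons]
        apply List.mem_cons_of_mem
        rcases he with he | he | he
        · exact List.mem_append.mpr (Or.inl he)
        · exact List.mem_append.mpr (Or.inr (he ▸ List.mem_cons_self))
        · exact List.mem_append.mpr (Or.inr (List.mem_cons_of_mem _ he))
      have hCedge0 : s(p c2, p c1) ∈ C.edges := by
        rw [hCdef, Walk.edges_cons]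
        exact List.mem_cons_self
      obtain ⟨u, w, hu, hw, huw, hnot⟩ := hchordal C hcyc (by omega)
      have crosscase : ∀ u w : V, u ∈ Q1.support → w ∈ Q2.support → G.Adj u w →
          s(u, w) ∉ C.edges → False := by
        intro u w huQ1 hwQ2 huw hnot
        have hreach_u : H.Reachable (p c1) u := hSQ1 u huQ1
        have hreach_w : H.Reachable (p c2) w := hSQ2 w hwQ2
        have hDmem : s(u, w) ∈ D := by
          by_contra hnD
          have hHadj : H.Adj u w := by rw [hH, deleteEdges_adj]; exact ⟨huw, hnD⟩
          exact hdisj w (hreach_u.trans hHadj.reachable) hreach_w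
        rw [hDiff] at hDmem
        obtain ⟨s, his, hsj, hseq⟩ := hDmem
        rw [Sym2.eq_iff] at hseq
        obtain ⟨s1, s2, hors, hus1, hws2⟩ :
            ∃ s1 s2 : ℕ, ((s1 = s ∧ s2 = s + 1) ∨ (s1 = s + 1 ∧ s2 = s)) ∧
              u = p s1 ∧ w = p s2 := by
          rcases hseq with ⟨h1, h2⟩ | ⟨h1, h2⟩
          · exact ⟨s, s + 1, Or.inl ⟨rfl, rfl⟩, h1, h2⟩
          · exact ⟨s + 1, s, Or.inr ⟨rfl, rfl⟩, h1, h2⟩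
        subst hus1; subst hws2
        have hcross_s : ¬ H.Reachable (p s1) (p s2) :=
          fun h => hdisj (p s2) (hreach_u.trans h) hreach_w
        have hs1b : s1 < P0.length := by rcases hors with ⟨rfl, _⟩ | ⟨rfl, _⟩ <;> omega
        have hs2b : s2 < P0.length := by rcases hors with ⟨_, rfl⟩ | ⟨_, rfl⟩ <;> omega
        have hsm : s ≠ m := by
          rintro rfl
          rcases hors with ⟨rfl, rfl⟩ | ⟨rfl, rfl⟩
          · exact hcross_s hmre
          · exact hcross_s hmre.symm
        have hsplit1 : (Q1.takeUntil _ huQ1).length + (Q1.dropUntil _ huQ1).length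
            = Q1.length := by
          have := congrArg Walk.length (Q1.take_spec huQ1)
          rwa [Walk.length_append] at this
        have hsplit2 : (Q2.takeUntil _ hwQ2).length + (Q2.dropUntil _ hwQ2).length
            = Q2.length := by
          have := congrArg Walk.length (Q2.take_spec hwQ2)
          rwa [Walk.length_append] at this
        have hreS1 : ∀ a ∈ Q1.support, H.Reachable (p s1) a :=
          fun a ha => (hreach_u.symm).trans (hSQ1 a ha)
        have hreS2 : ∀ a ∈ Q2.support, H.Reachable (p s2) a :=
          fun a ha => (hreach_w.symm).trans (hSQ2 a ha)
        rcases Nat.lt_or_ge s m with hsm' | hsm'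
        · -- s < m : new pair (s, d) with walks Q1.dropUntil and Q2.takeUntil
          have hstrict : (Q1.dropUntil _ huQ1).length + (Q2.takeUntil _ hwQ2).length < N := by
            rcases Nat.lt_or_ge ((Q1.dropUntil _ huQ1).length + (Q2.takeUntil _ hwQ2).length) N
              with h | h
            · exact h
            · exfalso
              have h1 : (Q1.takeUntil _ huQ1).length = 0 := by omega
              have h2 : (Q2.dropUntil _ hwQ2).length = 0 := by omega
              have e1 : p c1 = p s1 := (Q1.takeUntil _ huQ1).eq_of_length_eq_zero h1
              have e2 : p s2 = p c2 := (Q2.dropUntil _ hwQ2).eq_of_length_eq_zero h2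
              apply hnot
              have heqq : s(p s1, p s2) = s(p c2, p c1) := by rw [← e1, ← e2, Sym2.eq_swap]
              rw [heqq]
              exact hCedge0
          exact ih _ hstrict ⟨s, d, s1, s2, d1, d2, ⟨his, by omega, hdj⟩, hors, hord,
            ⟨m, hsm', hm2, hmre⟩, hcross_s, Q1.dropUntil _ huQ1, Q2.takeUntil _ hwQ2,
            (fun a ha => hreS1 a (Q1.support_dropUntil_subset huQ1 ha)),
            (fun a ha => hreS2 a (Q2.support_takeUntil_subset hwQ2 ha)), rfl⟩
        · -- m < s : new pair (c, s) with walks Q1.takeUntil and Q2.dropUntil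
          have hms : m < s := by omega
          have hstrict : (Q1.takeUntil _ huQ1).length + (Q2.dropUntil _ hwQ2).length < N := by
            rcases Nat.lt_or_ge ((Q1.takeUntil _ huQ1).length + (Q2.dropUntil _ hwQ2).length) N
              with h | h
            · exact h
            · exfalso
              have h1 : (Q1.dropUntil _ huQ1).length = 0 := by omega
              have h2 : (Q2.takeUntil _ hwQ2).length = 0 := by omega
              have e1 : p s1 = p d1 := (Q1.dropUntil _ huQ1).eq_of_length_eq_zero h1
              have e2 : p d2 = p s2 := (Q2.takeUntil _ hwQ2).eq_of_length_eq_zero h2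
              apply hnot
              have heqq : s(p s1, p s2) = s(p d1, p d2) := by rw [e1, ← e2]
              rw [heqq]
              exact hCedges _ (Or.inr (Or.inl rfl))
          exact ih _ hstrict ⟨c, s, c1, c2, s1, s2, ⟨hic, by omega, hsj⟩, horc, hors,
            ⟨m, hm1, hms, hmre⟩, hcross, Q1.takeUntil _ huQ1, Q2.dropUntil _ hwQ2,
            (fun a ha => hSQ1 a (Q1.support_takeUntil_subset huQ1 ha)),
            (fun a ha => hSQ2 a (Q2.support_dropUntil_subset hwQ2 ha)), rfl⟩
      rcases hCsupp u hu with hu1 | hu2 <;> rcases hCsupp w hw with hw1 | hw2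
      · -- both in Q1 : shortcut
        have hnQ1 : s(u, w) ∉ Q1.edges := fun hmem => hnot (hCedges _ (Or.inl hmem))
        obtain ⟨Q1', hsub, _, hlt⟩ := shortcut Q1 hu1 hw1 huw hnQ1
        exact ih _ (by omega : Q1'.length + Q2.length < N)
          ⟨c, d, c1, c2, d1, d2, ⟨hic, hcd, hdj⟩, horc, hord, ⟨m, hm1, hm2, hmre⟩,
            hcross, Q1', Q2, (fun a ha => hSQ1 a (hsub a ha)), hSQ2, rfl⟩
      · exact crosscase u w hu1 hw2 huw hnot
      · exact crosscase w u hw1 hu2 huw.symm (by rwa [Sym2.eq_swap] at hnot)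
      · have hnQ2 : s(u, w) ∉ Q2.edges := fun hmem => hnot (hCedges _ (Or.inr (Or.inr hmem)))
        obtain ⟨Q2', hsub, _, hlt⟩ := shortcut Q2 hu2 hw2 huw hnQ2
        exact ih _ (by omega : Q1.length + Q2'.length < N)
          ⟨c, d, c1, c2, d1, d2, ⟨hic, hcd, hdj⟩, horc, hord, ⟨m, hm1, hm2, hmre⟩,
            hcross, Q1, Q2', hSQ1, (fun a ha => hSQ2 a (hsub a ha)), rfl⟩
  -- now derive the claim
  intro hre
  -- t is not i and not j - 1
  have hti : t ≠ i := by rintro rfl; exact hcrossi hre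
  have hcrossj' : ¬ H.Reachable (p (j - 1)) (p (j - 1 + 1)) := by
    rw [show j - 1 + 1 = j by omega]
    exact hcrossj
  have htj1 : t ≠ j - 1 := by rintro rfl; exact hcrossj' hre
  have htlt : t < j - 1 := by omega
  -- c : greatest crossing index ≤ t
  set P : ℕ → Prop := fun s => i ≤ s ∧ ¬ H.Reachable (p s) (p (s + 1)) with hPdef
  have hPi : P i := ⟨le_refl i, hcrossi⟩
  set c := Nat.findGreatest P t with hcdef
  have hPc : P c := Nat.findGreatest_spec hit hPi
  have hic' : i ≤ c := hPc.1
  have hcle : c ≤ t := Nat.findGreatest_le t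
  have hcnet : c ≠ t := by
    rintro h
    exact hPc.2 (h ▸ hre)
  have hclt : c < t := lt_of_le_of_ne hcle hcnet
  have hcgreat : ∀ k, c < k → k ≤ t → H.Reachable (p k) (p (k + 1)) := by
    intro k hk1 hk2
    have h5 := Nat.findGreatest_is_greatest (hcdef ▸ hk1) hk2
    rw [hPdef] at h5
    by_contra hnr
    exact h5 ⟨by omega, hnr⟩
  -- d : least crossing index > t
  set Q : ℕ → Prop := fun k => (¬ H.Reachable (p k) (p (k + 1))) ∧ t < k with hQdef
  have hQex : ∃ k, Q k := ⟨j - 1, hcrossj', htlt⟩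
  set d := Nat.find hQex with hddef
  have hQd : Q d := Nat.find_spec hQex
  have hdle : d ≤ j - 1 := Nat.find_min' hQex ⟨hcrossj', htlt⟩
  have hdmin : ∀ k, t < k → k < d → H.Reachable (p k) (p (k + 1)) := by
    intro k hk1 hk2
    have h5 := Nat.find_min hQex (hddef ▸ hk2)
    rw [hQdef] at h5
    by_contra hnr
    exact h5 ⟨hnr, hk1⟩
  have htd : t < d := hQd.2
  have hdj' : d < j := by omega
  -- all indices strictly between c and d are non-crossing
  have hgap : ∀ k, c < k → k < d → H.Reachable (p k) (p (k + 1)) := by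
    intro k hk1 hk2
    rcases le_or_gt k t with h | h
    · exact hcgreat k hk1 h
    · exact hdmin k h hk2
  -- chain within the gap
  have hchain : ∀ k, c + 1 ≤ k → k ≤ d → H.Reachable (p (c + 1)) (p k) := by
    intro k
    induction k using Nat.strong_induction_on with
    | _ k ihk =>
      intro hk1 hk2
      rcases Nat.eq_or_lt_of_le hk1 with h | h
      · rw [← h]
      · have hk0 : 1 ≤ k := by omega
        have hprev : H.Reachable (p (c + 1)) (p (k - 1)) := ihk (k - 1) (by omega)
          (by omega) (by omega)
        have hstep : H.Reachable (p (k - 1)) (p (k - 1 + 1)) :=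
          hgap (k - 1) (by omega) (by omega)
        rw [show k - 1 + 1 = k by omega] at hstep
        exact hprev.trans hstep
  have hreach_c1_d : H.Reachable (p (c + 1)) (p d) := hchain d (by omega) (le_refl d)
  -- crossing at c and d, and the two-class trick gives Reachable (p c) (p (d+1))
  have hCrc : ¬ H.Reachable (p c) (p (c + 1)) := hPc.2
  have hCrd : ¬ H.Reachable (p d) (p (d + 1)) := hQd.1
  have hreach_c_d1 : H.Reachable (p c) (p (d + 1)) := by
    rcases htwo (p c) with h1 | h1 <;> rcases htwo (p (d + 1)) with h2 | h2
    · exact h1.trans h2.symm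
    · exfalso
      rcases htwo (p (c + 1)) with h3 | h3
      · exact hCrc (h1.trans h3.symm)
      · have h4 : H.Reachable (p d) (p (i + 1)) := hreach_c1_d.symm.trans h3
        exact hCrd (h4.trans h2.symm)
    · exfalso
      rcases htwo (p (c + 1)) with h3 | h3
      · have h4 : H.Reachable (p d) (p i) := hreach_c1_d.symm.trans h3
        exact hCrd (h4.trans h2.symm)
      · exact hCrc (h1.trans h3.symm)
    · exact h1.trans h2.symm
  -- build the walks
  obtain ⟨W1, hW1⟩ := walk_of_reachable_deleteEdges (hH ▸ hreach_c1_d)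
  obtain ⟨W2, hW2⟩ := walk_of_reachable_deleteEdges (hH ▸ hreach_c_d1.symm)
  have hS1 : ∀ a ∈ W1.support, H.Reachable (p (c + 1)) a :=
    fun a ha => hH ▸ reachable_of_mem_support_avoid W1 hW1 ha
  have hS2 : ∀ a ∈ W2.support, H.Reachable (p c) a := by
    intro a ha
    have : H.Reachable (p (d + 1)) a := hH ▸ reachable_of_mem_support_avoid W2 hW2 ha
    exact hreach_c_d1.trans this
  exact noBad (W1.length + W2.length) ⟨c, d, c + 1, c, d, d + 1,
    ⟨hPc.1, by omega, hdj'⟩, Or.inr ⟨rfl, rfl⟩, Or.inl ⟨rfl, rfl⟩,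
    ⟨t, hclt, htd, hre⟩, (fun h => hCrc h.symm), W1, W2, hS1, hS2, rfl⟩

end ClaimA

section Dir1

variable {V : Type*} {G : SimpleGraph V}

/-- Minimality of a separator path: deleting the edges of any proper contiguous
subpath leaves `G` connected. -/
lemma min_connected (P0 : List V) (hne : P0 ≠ [])
    (hnd : P0.Nodup) {i j : ℕ} (hij : i < j) (hj : j < P0.length)
    (hsep : SeparatorPath G (subseq P0 i j)) {a b : ℕ}
    (hia : i ≤ a) (hab : a ≤ b) (hbj : b ≤ j) (hne2 : ¬(a = i ∧ b = j)) :
    (G.deleteEdges (edgesOf (subseq P0 a b))).Connected := by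
  have hcs : ContigSub (subseq P0 a b) (subseq P0 i j) := by
    refine ⟨a - i, b - i, by omega, ?_, ?_⟩
    · rw [length_subseq P0 hj]; omega
    · rw [subseq_eq_subseq P0 hj (by omega) (by omega) (by omega)]
      congr 1 <;> omega
  have hq : subseq P0 a b ≠ subseq P0 i j := by
    intro heq
    have hlen := congrArg List.length heq
    rw [length_subseq P0 (by omega : b < P0.length), length_subseq P0 hj] at hlen
    have h0a : 0 < (subseq P0 a b).length := by
      rw [length_subseq P0 (by omega : b < P0.length)]; omega
    have h0i : 0 < (subseq P0 i j).length := by rw [length_subseq P0 hj]; omega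
    have e3 : gv P0 hne (a + 0) = gv P0 hne (i + 0) := by
      rw [← get_subseq P0 hne (by omega : b < P0.length) h0a,
        ← get_subseq P0 hne hj h0i]
      simp only [List.get_eq_getElem]
      congr 1
    have hai : a = i := by
      have := gv_inj P0 hne hnd (by omega) (by omega) (by simpa using e3)
      omega
    exact hne2 ⟨hai, by omega⟩
  have h2 := hsep.2.2 (subseq P0 a b) hcs hq
  exact of_not_not h2

/-- Structure of the two sides determined by a separator path. -/
lemma sep_structure (P0 : List V) (hne : P0 ≠ [])
    (hc : P0.Chain' G.Adj) (hnd : P0.Nodup) {i j : ℕ} (hij : i < j) (hj : j < P0.length)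
    (hsep : SeparatorPath G (subseq P0 i j)) :
    ¬ (G.deleteEdges (edgesOf (subseq P0 i j))).Reachable (gv P0 hne i) (gv P0 hne (i + 1)) ∧
    ¬ (G.deleteEdges (edgesOf (subseq P0 i j))).Reachable (gv P0 hne (j - 1)) (gv P0 hne j) ∧
    (∀ v, (G.deleteEdges (edgesOf (subseq P0 i j))).Reachable v (gv P0 hne i) ∨
      (G.deleteEdges (edgesOf (subseq P0 i j))).Reachable v (gv P0 hne (i + 1))) := by
  classical
  set p : ℕ → V := gv P0 hne with hp
  set D : Set (Sym2 V) := edgesOf (subseq P0 i j) with hD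
  set H : SimpleGraph V := G.deleteEdges D with hH
  have hdis : ¬ H.Connected := hsep.2.1
  have hDiff : ∀ e : Sym2 V, e ∈ D ↔ ∃ s : ℕ, i ≤ s ∧ s < j ∧ e = s(p s, p (s + 1)) :=
    fun e => mem_edgesOf_subseq_iff P0 hne hj (le_of_lt hij)
  -- left end
  set D' : Set (Sym2 V) := edgesOf (subseq P0 (i + 1) j) with hD'
  have hD'iff : ∀ e : Sym2 V, e ∈ D' ↔ ∃ s : ℕ, i + 1 ≤ s ∧ s < j ∧ e = s(p s, p (s + 1)) :=
    fun e => mem_edgesOf_subseq_iff P0 hne hj hij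
  have hsub : D' ⊆ D := by
    intro e he
    rw [hD'iff] at he
    obtain ⟨s, h1, h2, h3⟩ := he
    exact (hDiff e).mpr ⟨s, by omega, h2, h3⟩
  have hkey : ∀ x y : V, G.Adj x y → s(x, y) ∈ D → s(x, y) ∉ D' →
      (x = p i ∧ y = p (i + 1)) ∨ (x = p (i + 1) ∧ y = p i) := by
    intro x y hadj hmem hmem'
    rw [hDiff] at hmem
    obtain ⟨s, h1, h2, h3⟩ := hmem
    have hs : s = i := by
      by_contra hne3
      exact hmem' ((hD'iff _).mpr ⟨s, by omega, h2, h3⟩)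
    subst hs
    rw [Sym2.eq_iff] at h3
    exact h3
  have hconn' : (G.deleteEdges D').Connected :=
    min_connected P0 hne hnd hij hj hsep (by omega) (by omega) (le_refl j) (by omega)
  have hcrossi : ¬ H.Reachable (p i) (p (i + 1)) := by
    intro hre
    apply hdis
    apply patch_connected hsub ?_ hconn'
    intro a b hadj hmem hmem'
    rcases hkey a b hadj hmem hmem' with ⟨rfl, rfl⟩ | ⟨rfl, rfl⟩
    · exact hre
    · exact hre.symm
  have htwo : ∀ v, H.Reachable v (p i) ∨ H.Reachable v (p (i + 1)) := by
    intro v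
    exact classify hkey (hconn'.preconnected v (p i)) (Or.inl (Reachable.refl _))
  -- right end
  set D'' : Set (Sym2 V) := edgesOf (subseq P0 i (j - 1)) with hD''
  have hD''iff : ∀ e : Sym2 V, e ∈ D'' ↔ ∃ s : ℕ, i ≤ s ∧ s < j - 1 ∧
      e = s(p s, p (s + 1)) :=
    fun e => mem_edgesOf_subseq_iff P0 hne (by omega) (by omega)
  have hsub'' : D'' ⊆ D := by
    intro e he
    rw [hD''iff] at he
    obtain ⟨s, h1, h2, h3⟩ := he
    exact (hDiff e).mpr ⟨s, h1, by omega, h3⟩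
  have hkey'' : ∀ x y : V, G.Adj x y → s(x, y) ∈ D → s(x, y) ∉ D'' →
      (x = p (j - 1) ∧ y = p j) ∨ (x = p j ∧ y = p (j - 1)) := by
    intro x y hadj hmem hmem'
    rw [hDiff] at hmem
    obtain ⟨s, h1, h2, h3⟩ := hmem
    have hs : s = j - 1 := by
      by_contra hne3
      exact hmem' ((hD''iff _).mpr ⟨s, h1, by omega, h3⟩)
    subst hs
    rw [show j - 1 + 1 = j by omega] at h3
    rw [Sym2.eq_iff] at h3
    exact h3
  have hconn'' : (G.deleteEdges D'').Connected :=
    min_connected P0 hne hnd hij hj hsep (le_refl i) (by omega) (by omega) (by omega)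
  have hcrossj : ¬ H.Reachable (p (j - 1)) (p j) := by
    intro hre
    apply hdis
    apply patch_connected hsub'' ?_ hconn''
    intro a b hadj hmem hmem'
    rcases hkey'' a b hadj hmem hmem' with ⟨rfl, rfl⟩ | ⟨rfl, rfl⟩
    · exact hre
    · exact hre.symm
  exact ⟨hcrossi, hcrossj, htwo⟩

set_option maxHeartbeats 1000000 in
/-- Direction 1 in coordinate form. -/
lemma dir1 (hchordal : Chordal G) (P0 : List V) (hne : P0 ≠ [])
    (hc : P0.Chain' G.Adj) (hnd : P0.Nodup) {i j : ℕ} (hij : i < j) (hj : j < P0.length)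
    (hsep : SeparatorPath G (subseq P0 i j)) :
    (∀ k l, i ≤ k → k ≤ j → i ≤ l → l ≤ j → k % 2 = l % 2 →
      (G.deleteEdges (edgesOf P0)).Reachable (gv P0 hne k) (gv P0 hne l)) ∧
    (∀ k l, i ≤ k → k ≤ j → i ≤ l → l ≤ j → k % 2 ≠ l % 2 →
      ¬ (G.deleteEdges (edgesOf P0)).Reachable (gv P0 hne k) (gv P0 hne l)) := by
  classical
  obtain ⟨hcrossi, hcrossj, htwo⟩ := sep_structure P0 hne hc hnd hij hj hsep
  set p : ℕ → V := gv P0 hne with hp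
  set D : Set (Sym2 V) := edgesOf (subseq P0 i j) with hD
  set H : SimpleGraph V := G.deleteEdges D with hH
  have hDiff : ∀ e : Sym2 V, e ∈ D ↔ ∃ s : ℕ, i ≤ s ∧ s < j ∧ e = s(p s, p (s + 1)) :=
    fun e => mem_edgesOf_subseq_iff P0 hne hj (le_of_lt hij)
  have hpinj : ∀ {k l : ℕ}, k < P0.length → l < P0.length → p k = p l → k = l :=
    fun hk hl h => gv_inj P0 hne hnd hk hl h
  have hpadj : ∀ {k : ℕ}, k + 1 < P0.length → G.Adj (p k) (p (k + 1)) :=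
    fun hk => adj_gv P0 hne hc hk
  have hcross : ∀ t, i ≤ t → t < j → ¬ H.Reachable (p t) (p (t + 1)) :=
    fun t h1 h2 => claimA hchordal P0 hne hc hnd i j hij hj hcrossi hcrossj htwo h1 h2
  -- parity anchors
  have hanchor : ∀ k, i ≤ k → k ≤ j →
      ((k - i) % 2 = 0 → H.Reachable (p k) (p i)) ∧
      ((k - i) % 2 = 1 → H.Reachable (p k) (p (i + 1))) := by
    intro k
    induction k using Nat.strong_induction_on with
    | _ k ihk =>
      intro h1 h2
      rcases Nat.eq_or_lt_of_le h1 with heq | hlt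
      · constructor
        · intro _
          rw [← heq]
        · intro hpar
          rw [← heq] at hpar
          simp at hpar
      · have hprev := ihk (k - 1) (by omega) (by omega) (by omega)
        have hcr : ¬ H.Reachable (p (k - 1)) (p k) := by
          have h5 := hcross (k - 1) (by omega) (by omega)
          rwa [show k - 1 + 1 = k by omega] at h5
        have htwok := htwo (p k)
        constructor
        · intro hpar
          have h3 : H.Reachable (p (k - 1)) (p (i + 1)) := hprev.2 (by omega)
          rcases htwok with h4 | h4
          · exact h4
          · exact absurd (h3.trans h4.symm) hcr
        · intro hpar
          have h3 : H.Reachable (p (k - 1)) (p i) := hprev.1 (by omega)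
          rcases htwok with h4 | h4
          · exact absurd (h3.trans h4.symm) hcr
          · exact h4
  -- same-parity reachability within H
  have hsame : ∀ k l, i ≤ k → k ≤ j → i ≤ l → l ≤ j → k % 2 = l % 2 →
      H.Reachable (p k) (p l) := by
    intro k l h1 h2 h3 h4 h5
    have ha1 := hanchor k h1 h2
    have ha2 := hanchor l h3 h4
    rcases Nat.mod_two_eq_zero_or_one (k - i) with hp0 | hp1
    · have e1 := ha1.1 hp0
      have e2 := ha2.1 (by omega)
      exact e1.trans e2.symm
    · have e1 := ha1.2 hp1
      have e2 := ha2.2 (by omega)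
      exact e1.trans e2.symm
  -- chords
  have hchord : ∀ k, i ≤ k → k + 2 ≤ j → G.Adj (p k) (p (k + 2)) := by
    intro k h1 h2
    apply chord_of_class hchordal {a | H.Reachable (p k) a}
      (hpadj (by omega)) (by
        have := hpadj (show (k + 1) + 1 < P0.length by omega)
        rwa [show k + 1 + 1 = k + 2 from rfl] at this)
      (fun h => by have := hpinj (by omega) (by omega) h; omega)
    · intro hmem
      exact hcross k h1 (by omega) hmem
    · intro w hw hadj
      by_cases hDm : s(p (k + 1), w) ∈ D
      · rw [hDiff] at hDm
        obtain ⟨s, h3, h4, h5⟩ := hDm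
        rw [Sym2.eq_iff] at h5
        rcases h5 with ⟨h6, h7⟩ | ⟨h6, h7⟩
        · have hks : k + 1 = s := hpinj (by omega) (by omega) h6
          right
          rw [h7, ← hks]
        · have hks : k + 1 = s + 1 := hpinj (by omega) (by omega) h6
          left
          rw [h7]
          congr 1
          omega
      · exfalso
        have hHadj : H.Adj (p (k + 1)) w := by
          rw [hH, deleteEdges_adj]; exact ⟨hadj, hDm⟩
        exact hcross k h1 (by omega) (hw.trans hHadj.reachable.symm)
    · have hre : H.Reachable (p k) (p (k + 2)) := hsame k (k + 2) h1 (by omega) (by omega)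
        h2 (by omega)
      obtain ⟨W, hW⟩ := walk_of_reachable_deleteEdges (hH ▸ hre)
      exact ⟨W, fun a ha => hH ▸ reachable_of_mem_support_avoid W hW ha⟩
  -- transfer to G3
  have hG3adj : ∀ k, i ≤ k → k + 2 ≤ j →
      (G.deleteEdges (edgesOf P0)).Adj (p k) (p (k + 2)) := by
    intro k h1 h2
    rw [deleteEdges_adj]
    exact ⟨hchord k h1 h2, chord_not_mem P0 hne hnd (by omega) (by omega) (by omega)⟩
  constructor
  · -- same parity reachable in G3
    have main : ∀ l k, i ≤ k → l ≤ j → k ≤ l → k % 2 = l % 2 →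
        (G.deleteEdges (edgesOf P0)).Reachable (p k) (p l) := by
      intro l
      induction l using Nat.strong_induction_on with
      | _ l ihl =>
        intro k h1 h2 h3 h4
        rcases Nat.eq_or_lt_of_le h3 with heq | hlt
        · rw [heq]
        · have hll : k + 2 ≤ l := by omega
          have hprev : (G.deleteEdges (edgesOf P0)).Reachable (p k) (p (l - 2)) :=
            ihl (l - 2) (by omega) k h1 (by omega) (by omega) (by omega)
          have hstep := hG3adj (l - 2) (by omega) (by omega)
          rw [show l - 2 + 2 = l by omega] at hstep
          exact hprev.trans hstep.reachable
    intro k l h1 h2 h3 h4 h5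
    rcases le_or_gt k l with h | h
    · exact main l k h1 h4 h h5
    · exact (main k l h3 h2 (le_of_lt h) h5.symm).symm
  · -- different parity not reachable in G3
    intro k l h1 h2 h3 h4 h5 hre
    have hre' : H.Reachable (p k) (p l) := by
      obtain ⟨W, hW⟩ := walk_of_reachable_deleteEdges hre
      exact hH ▸ reachable_deleteEdges_of_walk W
        (fun e he hmem => hW e he (edgesOf_subseq_subset P0 hj (le_of_lt hij) hmem))
    have ha1 := hanchor k h1 h2
    have ha2 := hanchor l h3 h4
    rcases Nat.mod_two_eq_zero_or_one (k - i) with hp0 | hp1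
    · have e1 := ha1.1 hp0
      have e2 := ha2.2 (by omega)
      exact hcrossi ((e1.symm.trans hre').trans e2)
    · have e1 := ha1.2 hp1
      have e2 := ha2.1 (by omega)
      exact hcrossi ((e2.symm.trans hre'.symm).trans e1)

end Dir1


section Dir2

variable {V : Type*} {G : SimpleGraph V}

/-- Decomposition of a walk of length two. -/
lemma walk_length_two {a b : V} (Q : G.Walk a b) (h : Q.length = 2) :
    ∃ x : V, ∃ (h1 : G.Adj a x) (h2 : G.Adj x b),
      s(a, x) ∈ Q.edges ∧ s(x, b) ∈ Q.edges := by
  cases Q with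
  | nil => simp at h
  | cons h1 q =>
    cases q with
    | nil => simp at h
    | cons h2 q2 =>
      have hq2 : q2.length = 0 := by simp only [Walk.length_cons] at h; omega
      have := q2.eq_of_length_eq_zero hq2
      subst this
      exact ⟨_, h1, h2, by simp, by simp⟩

set_option maxHeartbeats 1600000 in
/-- Direction 2 in coordinate form. -/
lemma dir2 (hconn : G.Connected) (hchordal : Chordal G) (P0 : List V) (hne : P0 ≠ [])
    (hc : P0.Chain' G.Adj) (hnd : P0.Nodup) {i j : ℕ} (hij : i < j) (hj : j < P0.length)
    (hsplit1 : ∀ k l, i ≤ k → k ≤ j → i ≤ l → l ≤ j → k % 2 = l % 2 →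
      (G.deleteEdges (edgesOf P0)).Reachable (gv P0 hne k) (gv P0 hne l))
    (hsplit2 : ∀ k l, i ≤ k → k ≤ j → i ≤ l → l ≤ j → k % 2 ≠ l % 2 →
      ¬ (G.deleteEdges (edgesOf P0)).Reachable (gv P0 hne k) (gv P0 hne l))
    (hL : 1 ≤ i → ¬ ((G.deleteEdges (edgesOf P0)).Reachable (gv P0 hne (i - 1))
        (gv P0 hne (i + 1)) ∧
      ¬ (G.deleteEdges (edgesOf P0)).Reachable (gv P0 hne (i - 1)) (gv P0 hne i)))
    (hR : j + 1 < P0.length → ¬ ((G.deleteEdges (edgesOf P0)).Reachable (gv P0 hne (j + 1))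
        (gv P0 hne (j - 1)) ∧
      ¬ (G.deleteEdges (edgesOf P0)).Reachable (gv P0 hne (j + 1)) (gv P0 hne j))) :
    SeparatorPath G (subseq P0 i j) := by
  classical
  set p : ℕ → V := gv P0 hne with hp
  set D : Set (Sym2 V) := edgesOf (subseq P0 i j) with hD
  set D3 : Set (Sym2 V) := edgesOf P0 with hD3
  set G3 : SimpleGraph V := G.deleteEdges D3 with hG3
  have hDiff : ∀ e : Sym2 V, e ∈ D ↔ ∃ s : ℕ, i ≤ s ∧ s < j ∧ e = s(p s, p (s + 1)) :=
    fun e => mem_edgesOf_subseq_iff P0 hne hj (le_of_lt hij)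
  have hpinj : ∀ {k l : ℕ}, k < P0.length → l < P0.length → p k = p l → k = l :=
    fun hk hl h => gv_inj P0 hne hnd hk hl h
  have hpadj : ∀ {k : ℕ}, k + 1 < P0.length → G.Adj (p k) (p (k + 1)) :=
    fun hk => adj_gv P0 hne hc hk
  -- chords from the split condition
  have hchord : ∀ k, i ≤ k → k + 2 ≤ j → G.Adj (p k) (p (k + 2)) ∧
      s(p k, p (k + 2)) ∉ D3 := by
    intro k h1 h2
    have hadj : G.Adj (p k) (p (k + 2)) := by
      apply chord_of_class hchordal {a | G3.Reachable (p k) a}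
        (hpadj (by omega))
        (show G.Adj (p (k + 1)) (p (k + 2)) from hpadj (by omega))
        (fun h => by have := hpinj (by omega) (by omega) h; omega)
      · intro hmem
        exact hsplit2 k (k + 1) h1 (by omega) (by omega) (by omega) (by omega) hmem
      · intro w hw hadj'
        by_cases hmem : s(p (k + 1), w) ∈ D3
        · have hcases := mem_edgesOf_gv P0 hne hnd (show k + 1 < P0.length by omega) hmem
          rcases hcases with ⟨hb, rfl⟩ | ⟨hb, rfl⟩
          · right; rfl
          · left; rfl
        · exfalso
          have hG3adj : G3.Adj (p (k + 1)) w := by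
            rw [hG3, deleteEdges_adj]; exact ⟨hadj', hmem⟩
          exact hsplit2 k (k + 1) h1 (by omega) (by omega) (by omega) (by omega)
            (hw.trans hG3adj.reachable.symm)
      · have hre : G3.Reachable (p k) (p (k + 2)) :=
          hsplit1 k (k + 2) h1 (by omega) (by omega) h2 (by omega)
        obtain ⟨W, hW⟩ := walk_of_reachable_deleteEdges (hG3 ▸ hre)
        exact ⟨W, fun a ha => hG3 ▸ reachable_of_mem_support_avoid W hW ha⟩
    exact ⟨hadj, chord_not_mem P0 hne hnd (by omega) (by omega) (by omega)⟩
  -- connection ladders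
  have hladL : ∀ (E : Set (Sym2 V)), s(p i, p (i + 1)) ∉ E →
      (∀ k, i ≤ k → k + 2 ≤ j → s(p k, p (k + 2)) ∉ E) →
      ∀ k, i ≤ k → k ≤ j → (G.deleteEdges E).Reachable (p k) (p i) := by
    intro E hE1 hE2 k
    induction k using Nat.strong_induction_on with
    | _ k ihk =>
      intro h1 h2
      rcases Nat.eq_or_lt_of_le h1 with heq | hlt
      · rw [← heq]
      · rcases Nat.eq_or_lt_of_le (show i + 1 ≤ k by omega) with heq1 | hlt1
        · have hadj : (G.deleteEdges E).Adj (p i) (p (i + 1)) := by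
            rw [deleteEdges_adj]; exact ⟨hpadj (by omega), hE1⟩
          rw [← heq1]
          exact hadj.reachable.symm
        · have hstep : (G.deleteEdges E).Adj (p (k - 2)) (p k) := by
            rw [deleteEdges_adj]
            constructor
            · have := (hchord (k - 2) (by omega) (by omega)).1
              rwa [show k - 2 + 2 = k by omega] at this
            · have := hE2 (k - 2) (by omega) (by omega)
              rwa [show k - 2 + 2 = k by omega] at this
          exact hstep.reachable.symm.trans (ihk (k - 2) (by omega) (by omega) (by omega))
  have hladR : ∀ (E : Set (Sym2 V)), s(p (j - 1), p j) ∉ E →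
      (∀ k, i ≤ k → k + 2 ≤ j → s(p k, p (k + 2)) ∉ E) →
      ∀ k, i ≤ k → k ≤ j → (G.deleteEdges E).Reachable (p k) (p j) := by
    intro E hE1 hE2 k
    have key : ∀ m, ∀ k, j - m ≤ k → i ≤ k → k ≤ j → (G.deleteEdges E).Reachable (p k) (p j) := by
      intro m
      induction m with
      | zero =>
        intro k h0 h1 h2
        have : k = j := by omega
        rw [this]
      | succ m ihm =>
        intro k h0 h1 h2
        rcases Nat.lt_or_ge k j with hlt | hge
        · rcases Nat.eq_or_lt_of_le (show k + 1 ≤ j by omega) with heq1 | hlt1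
          · have hadj : (G.deleteEdges E).Adj (p (j - 1)) (p j) := by
              rw [deleteEdges_adj]; exact ⟨by
                have := hpadj (show j - 1 + 1 < P0.length by omega)
                rwa [show j - 1 + 1 = j by omega] at this, hE1⟩
            have hkj : k = j - 1 := by omega
            rw [hkj]
            exact hadj.reachable
          · have hstep : (G.deleteEdges E).Adj (p k) (p (k + 2)) := by
              rw [deleteEdges_adj]
              exact ⟨(hchord k h1 (by omega)).1, hE2 k h1 (by omega)⟩
            exact hstep.reachable.trans (ihm (k + 2) (by omega) (by omega) (by omega))
        · have : k = j := by omega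
          rw [this]
    exact fun h1 h2 => key j k (by omega) h1 h2
  -- separating
  have hsep2 : ¬ (G.deleteEdges D).Connected := by
    intro hcon
    have hre : (G.deleteEdges D).Reachable (p i) (p (i + 1)) := hcon.preconnected _ _
    obtain ⟨W0, hW0⟩ := walk_of_reachable_deleteEdges hre
    have noW : ∀ N, ∀ t (W : G.Walk (p t) (p (t + 1))), i ≤ t → t < j →
        (∀ e ∈ W.edges, e ∉ D) → W.length = N → False := by
      intro N
      induction N using Nat.strong_induction_on with
      | _ N ih =>
        intro t W h1 h2 hWD hlen
        have htb : t + 1 < P0.length := by omega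
        rcases Nat.lt_or_ge N 2 with hN2 | hN2
        · interval_cases N
          · have := W.eq_of_length_eq_zero hlen
            have := hpinj (by omega) htb this
            omega
          · exact hWD _ (edge_mem_of_length_eq_one W hlen)
              ((hDiff _).mpr ⟨t, h1, h2, rfl⟩)
        by_cases hbp : W.bypass.length < N
        · exact ih _ hbp t W.bypass h1 h2
            (fun e he => hWD e (W.edges_bypass_subset he)) rfl
        push_neg at hbp
        have hblen : W.bypass.length = N := le_antisymm (hlen ▸ W.length_bypass_le) hbp
        set Q := W.bypass with hQ
        have hQpath : Q.IsPath := W.bypass_isPath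
        have hQD : ∀ e ∈ Q.edges, e ∉ D := fun e he => hWD e (W.edges_bypass_subset he)
        rcases Nat.eq_or_lt_of_le hN2 with hN2e | hN3
        · -- triangle case
          obtain ⟨x, hax, hxb, he1, he2⟩ := walk_length_two Q (by omega)
          have he1D : s(p t, x) ∉ D := hQD _ he1
          have he2D : s(x, p (t + 1)) ∉ D := hQD _ he2
          by_cases hm1 : s(p t, x) ∈ D3
          · have hcases := mem_edgesOf_gv P0 hne hnd (show t < P0.length by omega) hm1
            rcases hcases with ⟨hb, rfl⟩ | ⟨hb, rfl⟩
            · exact he1D ((hDiff _).mpr ⟨t, h1, h2, rfl⟩)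
            · have hti : t = i ∧ 1 ≤ i := by
                by_contra hcon2
                have h3 : i ≤ t - 1 := by omega
                apply he1D
                apply (hDiff _).mpr ⟨t - 1, h3, by omega, ?_⟩
                rw [show t - 1 + 1 = t by omega, Sym2.eq_swap]
              obtain ⟨hti', hi1⟩ := hti
              have hchordL : s(p (t - 1), p (t + 1)) ∉ D3 :=
                chord_not_mem P0 hne hnd (by omega) (by omega) (by omega)
              have hadjL : G3.Adj (p (t - 1)) (p (t + 1)) := by
                rw [hG3, deleteEdges_adj]
                exact ⟨hxb, hchordL⟩
              rw [hti'] at hadjL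
              apply hL (by omega)
              refine ⟨hadjL.reachable, fun hri => ?_⟩
              exact hsplit2 i (i + 1) (le_refl i) (by omega) (by omega) (by omega) (by omega)
                (hri.symm.trans hadjL.reachable)
          · by_cases hm2 : s(x, p (t + 1)) ∈ D3
            · have hm2' : s(p (t + 1), x) ∈ D3 := by rwa [Sym2.eq_swap] at hm2
              have hcases := mem_edgesOf_gv P0 hne hnd htb hm2'
              rcases hcases with ⟨hb, rfl⟩ | ⟨hb, rfl⟩
              · have htj1 : t = j - 1 := by
                  by_contra hcon2
                  apply he2D
                  apply (hDiff _).mpr ⟨t + 1, by omega, by omega, ?_⟩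
                  rw [Sym2.eq_swap]
                have hjb : j + 1 < P0.length := by omega
                have hchordR : s(p (j - 1), p (j + 1)) ∉ D3 :=
                  chord_not_mem P0 hne hnd (by omega) (by omega) (by omega)
                have hadjR : G3.Adj (p (j - 1)) (p (j + 1)) := by
                  rw [hG3, deleteEdges_adj]
                  refine ⟨?_, hchordR⟩
                  have := hax
                  rwa [htj1, show j - 1 + 1 + 1 = j + 1 by omega] at this
                apply hR hjb
                refine ⟨hadjR.reachable.symm, fun hrj => ?_⟩
                exact hsplit2 (j - 1) j (by omega) (by omega) (by omega) (le_refl j) (by omega)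
                  (hadjR.reachable.trans hrj)
              · exact hax.ne rfl
            · have h3 : G3.Adj (p t) x := by rw [hG3, deleteEdges_adj]; exact ⟨hax, hm1⟩
              have h4 : G3.Adj x (p (t + 1)) := by rw [hG3, deleteEdges_adj]; exact ⟨hxb, hm2⟩
              exact hsplit2 t (t + 1) h1 (by omega) (by omega) h2 (by omega)
                (h3.reachable.trans h4.reachable)
        · -- long cycle case
          have hadjt : G.Adj (p (t + 1)) (p t) := (hpadj htb).symm
          have hQavoid : s(p (t + 1), p t) ∉ Q.edges := by
            intro hmem
            apply hQD _ hmem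
            apply (hDiff _).mpr ⟨t, h1, h2, ?_⟩
            rw [Sym2.eq_swap]
          have hcyc : (Walk.cons hadjt Q).IsCycle := by
            rw [Walk.cons_isCycle_iff]
            exact ⟨hQpath, hQavoid⟩
          have hClen : (Walk.cons hadjt Q).length = N + 1 := by
            rw [Walk.length_cons, hblen]
          obtain ⟨u, w, hu, hw, huw, hnot⟩ := hchordal _ hcyc (by omega)
          have hmemQ : ∀ a, a ∈ (Walk.cons hadjt Q).support → a ∈ Q.support := by
            intro a ha
            rw [Walk.support_cons] at ha
            rcases List.mem_cons.mp ha with rfl | ha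
            · exact Q.end_mem_support
            · exact ha
          have huQ := hmemQ u hu
          have hwQ := hmemQ w hw
          have hCe : ∀ e, e ∈ Q.edges → e ∈ (Walk.cons hadjt Q).edges := by
            intro e he
            rw [Walk.edges_cons]
            exact List.mem_cons_of_mem _ he
          by_cases hDm : s(u, w) ∈ D
          · rw [hDiff] at hDm
            obtain ⟨s, hs1, hs2, hseq⟩ := hDm
            obtain ⟨Z, hZe, hZl⟩ := seg Q huQ hwQ
            have hZD : ∀ e ∈ Z.edges, e ∉ D := fun e he => hQD e (hZe e he)
            have hst : s ≠ t ∨ True := Or.inr trivial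
            rw [Sym2.eq_iff] at hseq
            have hfirst : s(u, w) ∈ (Walk.cons hadjt Q).edges → False := hnot
            rcases hseq with ⟨h6, h7⟩ | ⟨h6, h7⟩
            · -- u = p s, w = p (s+1)
              subst h6; subst h7
              have hlt : Z.length < N := by
                rcases hZl with h | ⟨h8, h9⟩ | ⟨h8, h9⟩
                · exact hblen ▸ h
                · exfalso
                  have e1 : s = t := hpinj (by omega) (by omega) h8
                  apply hfirst
                  rw [Walk.edges_cons]
                  apply List.mem_cons.mpr
                  left
                  rw [e1, Sym2.eq_swap]
                · exfalso
                  have e1 : s = t + 1 := hpinj (by omega) (by omega) h8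
                  have e2 : s + 1 = t := hpinj (by omega) (by omega) h9
                  omega
              exact ih Z.length (by omega) s Z hs1 hs2 hZD rfl
            · -- u = p (s+1), w = p s : use the reverse
              subst h6; subst h7
              have hlt : Z.length < N := by
                rcases hZl with h | ⟨h8, h9⟩ | ⟨h8, h9⟩
                · exact hblen ▸ h
                · exfalso
                  have e1 : s + 1 = t := hpinj (by omega) (by omega) h8
                  have e2 : s = t + 1 := hpinj (by omega) (by omega) h9
                  omega
                · exfalso
                  have e1 : s = t := hpinj (by omega) (by omega) h9
                  apply hfirst
                  rw [Walk.edges_cons]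
                  apply List.mem_cons.mpr
                  left
                  rw [e1]
              refine ih Z.reverse.length (by rwa [Walk.length_reverse]) s Z.reverse hs1 hs2
                ?_ rfl
              intro e he
              rw [Walk.edges_reverse, List.mem_reverse] at he
              exact hZD e he
          · have hnQ : s(u, w) ∉ Q.edges := fun hm => hnot (hCe _ hm)
            obtain ⟨Q', hsub', hedges', hlt⟩ := shortcut Q huQ hwQ huw hnQ
            refine ih Q'.length (by omega) t Q' h1 h2 ?_ rfl
            intro e he
            rcases hedges' e he with he' | he'
            · exact hQD e he'
            · rw [he']
              exact hDm
    exact noW W0.length i W0 (le_refl i) hij hW0 rfl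
  -- assemble the separator path
  refine ⟨⟨⟨?_, ?_⟩, ?_⟩, hsep2, ?_⟩
  · -- nonempty
    apply List.ne_nil_of_length_pos
    rw [length_subseq P0 hj]
    omega
  · -- chain
    apply List.isChain_iff_getElem.mpr
    intro k hk
    show G.Adj ((subseq P0 i j).get ⟨k, by omega⟩) ((subseq P0 i j).get ⟨k + 1, hk⟩)
    rw [length_subseq P0 hj] at hk
    rw [get_subseq P0 hne hj, get_subseq P0 hne hj]
    have := hpadj (show i + k + 1 < P0.length by omega)
    rwa [show i + (k + 1) = i + k + 1 by omega]
  · exact (subseq_sublist P0 i j).nodup hnd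
  · -- minimality
    rintro q ⟨a', b', hab', hb', rfl⟩ hqne
    rw [length_subseq P0 hj] at hb'
    rw [subseq_eq_subseq P0 hj (le_of_lt hij) hab' (by omega)]
    set a := i + a' with ha
    set b := i + b' with hb
    have hbj : b ≤ j := by omega
    have habne : ¬ (a = i ∧ b = j) := by
      rintro ⟨ha1, hb1⟩
      apply hqne
      rw [subseq_eq_subseq P0 hj (le_of_lt hij) hab' (by omega)]
      rw [show i + a' = i from ha1, show i + b' = j from hb1]
    intro hsepq
    apply hsepq
    set E : Set (Sym2 V) := edgesOf (subseq P0 a b) with hE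
    have hEiff : ∀ e : Sym2 V, e ∈ E ↔ ∃ s : ℕ, a ≤ s ∧ s < b ∧ e = s(p s, p (s + 1)) :=
      fun e => mem_edgesOf_subseq_iff P0 hne (by omega) (by omega)
    have hEsub : E ⊆ D3 := edgesOf_subseq_subset P0 (by omega) (by omega)
    have hEchords : ∀ k, i ≤ k → k + 2 ≤ j → s(p k, p (k + 2)) ∉ E :=
      fun k h1 h2 hmem => (hchord k h1 h2).2 (hEsub hmem)
    have hbase : (G.deleteEdges (∅ : Set (Sym2 V))).Connected := by
      rw [deleteEdges_empty]
      exact hconn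
    apply patch_connected (Set.empty_subset _) ?_ hbase
    intro x y hadj hmem _
    rw [hEiff] at hmem
    obtain ⟨s, hs1, hs2, hseq⟩ := hmem
    have hpts : (G.deleteEdges E).Reachable (p s) (p (s + 1)) := by
      rcases (show i < a ∨ b < j by omega) with hcase | hcase
      · have hE1 : s(p i, p (i + 1)) ∉ E := by
          intro hmem2
          rw [hEiff] at hmem2
          obtain ⟨s', h3, h4, h5⟩ := hmem2
          rcases edge_eq_cases P0 hne hnd (by omega) (by omega) (by omega) h5
            with ⟨e1, e2⟩ | ⟨e1, e2⟩ <;> omega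
        have r1 := hladL E hE1 hEchords s (by omega) (by omega)
        have r2 := hladL E hE1 hEchords (s + 1) (by omega) (by omega)
        exact r1.trans r2.symm
      · have hE1 : s(p (j - 1), p j) ∉ E := by
          intro hmem2
          rw [hEiff] at hmem2
          obtain ⟨s', h3, h4, h5⟩ := hmem2
          have h5' : s(p (j - 1), p (j - 1 + 1)) = s(p s', p (s' + 1)) := by
            rwa [show j - 1 + 1 = j by omega]
          rcases edge_eq_cases P0 hne hnd (by omega) (by omega) (by omega) h5'
            with ⟨e1, e2⟩ | ⟨e1, e2⟩ <;> omega
        have r1 := hladR E hE1 hEchords s (by omega) (by omega)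
        have r2 := hladR E hE1 hEchords (s + 1) (by omega) (by omega)
        exact r1.trans r2.symm
    rcases (Sym2.eq_iff.mp hseq) with ⟨rfl, rfl⟩ | ⟨rfl, rfl⟩
    · exact hpts
    · exact hpts.symm

end Dir2


/-- For a simple path `P₀` in `G` and indices `i ≤ j < |P₀|`: in the graph
obtained by deleting the edges of `P₀` from `G`, vertices `P₀ₖ`
(`i ≤ k ≤ j`) of equal parity of index are in a common connected component,
while those of different parity are in different connected components. -/
def OddEvenSplit (G : SimpleGraph V) (P0 : List V) (i j : ℕ)
    (hj : j < P0.length) : Prop :=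
  (∀ (k l : ℕ) (hik : i ≤ k) (hkj : k ≤ j) (hil : i ≤ l) (hlj : l ≤ j),
      k % 2 = l % 2 →
      (G.deleteEdges (edgesOf P0)).Reachable
        (P0.get ⟨k, by omega⟩) (P0.get ⟨l, by omega⟩)) ∧
  (∀ (k l : ℕ) (hik : i ≤ k) (hkj : k ≤ j) (hil : i ≤ l) (hlj : l ≤ j),
      k % 2 ≠ l % 2 →
      ¬ (G.deleteEdges (edgesOf P0)).Reachable
        (P0.get ⟨k, by omega⟩) (P0.get ⟨l, by omega⟩))

/-- If `(P₀)_{i,j}` is a separator path then the odd/even split condition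
holds; conversely, if the condition holds for `(i,j)` and for no contiguous
subpath properly containing `(P₀)_{i,j}`, then `(P₀)_{i,j}` is a separator
path. -/
theorem separatorPath_iff_oddEvenSplit_maximal
    {V : Type*} [Fintype V] (G : SimpleGraph V)
    (hconn : G.Connected) (hchordal : Chordal G)
    (hnb : ∀ e : Sym2 V, ¬ G.IsBridge e)
    (P0 : List V) (hP0 : IsSimpleSeq G P0)
    (i j : ℕ) (hij : i < j) (hj : j < P0.length) :
    (SeparatorPath G (subseq P0 i j) → OddEvenSplit G P0 i j hj) ∧
    ((OddEvenSplit G P0 i j hj ∧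
      ∀ (x y : ℕ), x ≤ i → j ≤ y → (hy : y < P0.length) → (x, y) ≠ (i, j) →
        ¬ OddEvenSplit G P0 x y hy) →
      SeparatorPath G (subseq P0 i j)) := by
  classical
  have hne : P0 ≠ [] := hP0.1.1
  have hc : P0.Chain' G.Adj := hP0.1.2
  have hnd : P0.Nodup := hP0.2
  set p : ℕ → V := gv P0 hne with hp
  set G3 : SimpleGraph V := G.deleteEdges (edgesOf P0) with hG3
  have hconv : ∀ (x y : ℕ) (hxy : x ≤ y) (hy : y < P0.length), OddEvenSplit G P0 x y hy ↔
      ((∀ k l, x ≤ k → k ≤ y → x ≤ l → l ≤ y → k % 2 = l % 2 →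
        G3.Reachable (p k) (p l)) ∧
       (∀ k l, x ≤ k → k ≤ y → x ≤ l → l ≤ y → k % 2 ≠ l % 2 →
        ¬ G3.Reachable (p k) (p l))) := by
    intro x y hxy hy
    unfold OddEvenSplit
    constructor
    · rintro ⟨h1, h2⟩
      constructor
      · intro k l hk1 hk2 hl1 hl2 hpar
        have h3 := h1 k l hk1 hk2 hl1 hl2 hpar
        rw [hp, gv_eq_get P0 hne (by omega : k < P0.length),
          gv_eq_get P0 hne (by omega : l < P0.length)]
        exact h3
      · intro k l hk1 hk2 hl1 hl2 hpar
        have h3 := h2 k l hk1 hk2 hl1 hl2 hpar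
        rw [hp, gv_eq_get P0 hne (by omega : k < P0.length),
          gv_eq_get P0 hne (by omega : l < P0.length)]
        exact h3
    · rintro ⟨h1, h2⟩
      constructor
      · intro k l hk1 hk2 hl1 hl2 hpar
        have h3 := h1 k l hk1 hk2 hl1 hl2 hpar
        rw [hp, gv_eq_get P0 hne (by omega : k < P0.length),
          gv_eq_get P0 hne (by omega : l < P0.length)] at h3
        exact h3
      · intro k l hk1 hk2 hl1 hl2 hpar
        have h3 := h2 k l hk1 hk2 hl1 hl2 hpar
        rw [hp, gv_eq_get P0 hne (by omega : k < P0.length),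
          gv_eq_get P0 hne (by omega : l < P0.length)] at h3
        exact h3
  constructor
  · -- direction 1
    intro hsep
    rw [hconv i j (le_of_lt hij) hj]
    exact dir1 hchordal P0 hne hc hnd hij hj hsep
  · -- direction 2
    rintro ⟨hoes, hmax⟩
    rw [hconv i j (le_of_lt hij) hj] at hoes
    obtain ⟨hs1, hs2⟩ := hoes
    have extendL : ∀ (_ : 1 ≤ i), G3.Reachable (p (i - 1)) (p (i + 1)) → False := by
      intro hi1 hreL
      have hnr : ¬ G3.Reachable (p (i - 1)) (p i) := by
        intro h
        exact hs2 i (i + 1) (le_refl i) (by omega) (by omega) (by omega) (by omega)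
          (h.symm.trans hreL)
      apply hmax (i - 1) j (by omega) (le_refl j) hj (by
        intro hcon
        have := congrArg Prod.fst hcon
        simp at this
        omega)
      rw [hconv (i - 1) j (by omega) hj]
      constructor
      · intro k l hk1 hk2 hl1 hl2 hpar
        rcases Nat.eq_or_lt_of_le hk1 with hk | hk <;> rcases Nat.eq_or_lt_of_le hl1 with hl | hl
        · rw [← hk, ← hl]
        · rw [← hk]
          exact hreL.trans (hs1 (i + 1) l (by omega) (by omega) (by omega) hl2 (by omega))
        · rw [← hl]
          exact (hreL.trans (hs1 (i + 1) k (by omega) (by omega) (by omega) hk2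
            (by omega))).symm
        · exact hs1 k l (by omega) hk2 (by omega) hl2 hpar
      · intro k l hk1 hk2 hl1 hl2 hpar hre
        rcases Nat.eq_or_lt_of_le hk1 with hk | hk <;> rcases Nat.eq_or_lt_of_le hl1 with hl | hl
        · rw [← hk, ← hl] at hpar
          exact hpar rfl
        · rw [← hk] at hre
          have h4 : G3.Reachable (p l) (p i) :=
            hs1 l i (by omega) hl2 (by omega) (by omega) (by omega)
          exact hnr (hre.trans h4)
        · rw [← hl] at hre
          have h4 : G3.Reachable (p k) (p i) :=
            hs1 k i (by omega) hk2 (by omega) (by omega) (by omega)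
          exact hnr (hre.symm.trans h4)
        · exact hs2 k l (by omega) hk2 (by omega) hl2 hpar hre
    have extendR : ∀ (_ : j + 1 < P0.length), G3.Reachable (p (j + 1)) (p (j - 1)) → False := by
      intro hjb hreR
      have hnr : ¬ G3.Reachable (p (j + 1)) (p j) := by
        intro h
        exact hs2 (j - 1) j (by omega) (by omega) (by omega) (le_refl j) (by omega)
          (hreR.symm.trans h)
      apply hmax i (j + 1) (le_refl i) (by omega) hjb (by
        intro hcon
        have := congrArg Prod.snd hcon
        simp at this)
      rw [hconv i (j + 1) (by omega) hjb]
      constructor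
      · intro k l hk1 hk2 hl1 hl2 hpar
        rcases Nat.eq_or_lt_of_le hk2 with hk | hk <;> rcases Nat.eq_or_lt_of_le hl2 with hl | hl
        · rw [hk, hl]
        · rw [hk]
          exact hreR.trans (hs1 (j - 1) l (by omega) (by omega) hl1 (by omega)
            (by omega))
        · rw [hl]
          exact ((hreR.trans (hs1 (j - 1) k (by omega) (by omega) hk1 (by omega)
            (by omega))).symm)
        · exact hs1 k l hk1 (by omega) hl1 (by omega) hpar
      · intro k l hk1 hk2 hl1 hl2 hpar hre
        rcases Nat.eq_or_lt_of_le hk2 with hk | hk <;> rcases Nat.eq_or_lt_of_le hl2 with hl | hl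
        · rw [hk, hl] at hpar
          exact hpar rfl
        · rw [hk] at hre
          have h4 : G3.Reachable (p l) (p j) :=
            hs1 l j hl1 (by omega) (by omega) (le_refl j) (by omega)
          exact hnr (hre.trans h4)
        · rw [hl] at hre
          have h4 : G3.Reachable (p k) (p j) :=
            hs1 k j hk1 (by omega) (by omega) (le_refl j) (by omega)
          exact hnr (hre.symm.trans h4)
        · exact hs2 k l hk1 (by omega) hl1 (by omega) hpar hre
    exact dir2 hconn hchordal P0 hne hc hnd hij hj hs1 hs2
      (fun hi1 hand => extendL hi1 hand.1) (fun hjb hand => extendR hjb hand.1)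


end NSP
end

section
/- Let p be a simple path and let 0 ≤ i < j < |p| be indices with j − i > 1 such that p_i and p_j are adjacent in G. Let p′ be the path obtained from p by replacing the contiguous subpath p_{i,j} with the single edge between p_i and p_j. Then for all vertices u and v, if u and v are weakly p-connected, then u and v are weakly p′-connected. -/
open SimpleGraph

namespace NSP

variable {V : Type*}

private lemma reachable_of_chain' {H : SimpleGraph V} :
    ∀ (q : List V), q.Chain' H.Adj → ∀ {u v : V}, q.head? = some u →
      q.getLast? = some v → H.Reachable u v
  | [], _, u, v, hu, _ => by simp at hu
  | [a], _, u, v, hu, hv => by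
      simp only [List.head?_cons, Option.some.injEq] at hu
      simp only [List.getLast?_singleton, Option.some.injEq] at hv
      subst hu; subst hv; exact Reachable.refl _
  | a :: b :: t, hc, u, v, hu, hv => by
      change List.IsChain _ _ at hc; rw [List.isChain_cons_cons] at hc
      simp only [List.head?_cons, Option.some.injEq] at hu
      subst hu
      have hv' : (b :: t).getLast? = some v := by
        rwa [List.getLast?_cons_cons] at hv
      exact (hc.1.reachable).trans (reachable_of_chain' (b :: t) hc.2 rfl hv')

private lemma reachable_mono_aux {H H' : SimpleGraph V}
    (h : ∀ a b : V, H.Adj a b → H'.Reachable a b) {u v : V}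
    (hr : H.Reachable u v) : H'.Reachable u v := by
  obtain ⟨w⟩ := hr
  induction w with
  | nil => exact Reachable.refl _
  | cons hadj _ ih => exact (h _ _ hadj).trans ih

private lemma edges_disjoint_iff {q : List V} {D : Set (Sym2 V)} :
    edgesOf q ∩ D = ∅ ↔ ∀ (k : ℕ) (h : k + 1 < q.length),
      s(q.get ⟨k, by omega⟩, q.get ⟨k + 1, h⟩) ∉ D := by
  constructor
  · intro h k hk hmem
    have hm : s(q.get ⟨k, by omega⟩, q.get ⟨k + 1, hk⟩) ∈ edgesOf q ∩ D :=
      ⟨⟨k, hk, rfl⟩, hmem⟩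
    rw [h] at hm
    exact hm
  · intro h
    ext e
    simp only [Set.mem_inter_iff, Set.mem_empty_iff_false, iff_false, not_and]
    rintro ⟨k, hk, rfl⟩
    exact h k hk

/-- Replacing a contiguous subpath `p_{i,j}` (with `j - i > 1` and `p_i`
adjacent to `p_j`) by the single edge between `p_i` and `p_j` preserves
weak connectivity. -/
theorem weaklyConn_of_replace_by_edge
    {V : Type*} [Fintype V] (G : SimpleGraph V)
    (hconn : G.Connected) (hchordal : Chordal G)
    (p : List V) (hp : IsSimpleSeq G p)
    (i j : ℕ) (hij : i < j) (hj : j < p.length) (hgap : 1 < j - i)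
    (hadj : G.Adj (p.get ⟨i, by omega⟩) (p.get ⟨j, hj⟩)) :
    ∀ u v : V, WeaklyConn G p u v →
      WeaklyConn G (p.take (i + 1) ++ p.drop j) u v := by
  obtain ⟨⟨hpne, hpchain⟩, hpnd⟩ := hp
  set p' := p.take (i + 1) ++ p.drop j with hp'def
  have hlen' : p'.length = (i + 1) + (p.length - j) := by
    simp only [hp'def, List.length_append, List.length_take, List.length_drop]
    omega
  have hgetcongr : ∀ (a b : ℕ) (ha : a < p.length) (hb : b < p.length), a = b →
      p.get ⟨a, ha⟩ = p.get ⟨b, hb⟩ := by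
    intro a b ha hb h; subst h; rfl
  have hget1 : ∀ (k : ℕ) (hk : k < p'.length), k ≤ i →
      p'.get ⟨k, hk⟩ = p.get ⟨k, by omega⟩ := by
    intro k hk hki
    simp only [hp'def, List.get_eq_getElem, List.getElem_append]
    rw [dif_pos (by simp only [List.length_take]; omega)]
    rw [List.getElem_take]
  have hget2 : ∀ (k : ℕ) (hk : k < p'.length), i < k →
      p'.get ⟨k, hk⟩ = p.get ⟨j + (k - (i + 1)), by omega⟩ := by
    intro k hk hki
    simp only [hp'def, List.get_eq_getElem, List.getElem_append]
    have hmin : (List.take (i + 1) p).length = i + 1 := by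
      rw [List.length_take]; omega
    rw [dif_neg (by omega), List.getElem_drop]
    congr 1
    rw [hmin]
  have hinj : ∀ (a b : ℕ) (ha : a < p.length) (hb : b < p.length),
      p.get ⟨a, ha⟩ = p.get ⟨b, hb⟩ → a = b := by
    intro a b ha hb h
    have := List.nodup_iff_injective_get.mp hpnd h
    exact congrArg Fin.val this
  have hedge' : ∀ e ∈ edgesOf p',
      (∃ (a : ℕ) (ha : a + 1 < p.length), (a < i ∨ j ≤ a) ∧
        e = s(p.get ⟨a, by omega⟩, p.get ⟨a + 1, ha⟩)) ∨
      e = s(p.get ⟨i, by omega⟩, p.get ⟨j, hj⟩) := by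
    rintro e ⟨k, hk1, rfl⟩
    by_cases hki : k + 1 ≤ i
    · left
      refine ⟨k, by omega, Or.inl (by omega), ?_⟩
      rw [hget1 k (by omega) (by omega), hget1 (k + 1) hk1 hki]
    · by_cases hki2 : k = i
      · right
        subst hki2
        rw [hget1 k (by omega) le_rfl, hget2 (k + 1) hk1 (by omega)]
        exact congrArg₂ (fun x y => s(x, y)) rfl (hgetcongr _ _ _ _ (by omega))
      · left
        have hki3 : i < k := by omega
        refine ⟨j + (k - (i + 1)), by omega, Or.inr (by omega), ?_⟩
        rw [hget2 k (by omega) hki3, hget2 (k + 1) hk1 (by omega)]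
        exact congrArg₂ (fun x y => s(x, y)) rfl (hgetcongr _ _ _ _ (by omega))
  have hpget : ∀ (k : ℕ) (h : k + 1 < p.length),
      G.Adj (p.get ⟨k, by omega⟩) (p.get ⟨k + 1, h⟩) := by
    intro k h
    exact List.isChain_iff_getElem.mp hpchain k (by omega)
  have hmid : ∀ (k : ℕ) (hik : i ≤ k) (hkj : k < j),
      s(p.get ⟨k, by omega⟩, p.get ⟨k + 1, by omega⟩) ∉ edgesOf p' := by
    intro k hik hkj hmem
    rcases hedge' _ hmem with ⟨a, ha, hrange, heq⟩ | heq
    · rw [Sym2.eq_iff] at heq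
      rcases heq with ⟨h1, h2⟩ | ⟨h1, h2⟩
      · have := hinj _ _ _ _ h1; omega
      · have e1 := hinj _ _ _ _ h1; have e2 := hinj _ _ _ _ h2; omega
    · rw [Sym2.eq_iff] at heq
      rcases heq with ⟨h1, h2⟩ | ⟨h1, h2⟩
      · have e1 := hinj _ _ _ _ h1; have e2 := hinj _ _ _ _ h2; omega
      · have := hinj _ _ _ _ h1; omega
  have hreach : ∀ (k : ℕ) (hik : i ≤ k) (hkj : k ≤ j),
      (G.deleteEdges (edgesOf p')).Reachable
        (p.get ⟨i, by omega⟩) (p.get ⟨k, by omega⟩) := by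
    intro k hik
    induction k, hik using Nat.le_induction with
    | base => intro _; exact Reachable.refl _
    | succ n hn ih =>
      intro h
      have hadj' : (G.deleteEdges (edgesOf p')).Adj
          (p.get ⟨n, by omega⟩) (p.get ⟨n + 1, by omega⟩) :=
        SimpleGraph.deleteEdges_adj.mpr ⟨hpget n (by omega), hmid n hn (by omega)⟩
      exact (ih (by omega)).trans hadj'.reachable
  have hchordreach : (G.deleteEdges (edgesOf p')).Reachable
      (p.get ⟨i, by omega⟩) (p.get ⟨j, hj⟩) := hreach j (le_of_lt hij) le_rfl
  have hstep : ∀ a b : V, (G.deleteEdges (edgesOf p)).Adj a b →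
      (G.deleteEdges (edgesOf p')).Reachable a b := by
    intro a b hab
    rw [SimpleGraph.deleteEdges_adj] at hab
    by_cases hmem : s(a, b) ∈ edgesOf p'
    · rcases hedge' _ hmem with ⟨c, hc, _, heq⟩ | heq
      · exact absurd ⟨c, hc, heq⟩ hab.2
      · rw [Sym2.eq_iff] at heq
        rcases heq with ⟨h1, h2⟩ | ⟨h1, h2⟩
        · subst h1; subst h2; exact hchordreach
        · subst h1; subst h2; exact hchordreach.symm
    · exact (SimpleGraph.deleteEdges_adj.mpr ⟨hab.1, hmem⟩).reachable
  rintro u v ⟨q, ⟨hqne, hqchain⟩, hqu, hqv, hqdisj⟩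
  have hq' : q.Chain' (G.deleteEdges (edgesOf p)).Adj := by
    change List.IsChain _ _; rw [List.isChain_iff_getElem]
    intro k hk
    exact SimpleGraph.deleteEdges_adj.mpr
      ⟨List.isChain_iff_getElem.mp hqchain k hk,
       edges_disjoint_iff.mp hqdisj k (by omega)⟩
  have hr2 := reachable_mono_aux hstep (reachable_of_chain' q hq' hqu hqv)
  obtain ⟨w⟩ := hr2
  refine ⟨w.support, ⟨w.support_ne_nil, ?_⟩, ?_, ?_, ?_⟩
  · exact (w.isChain_adj_support).imp (fun a b h => (SimpleGraph.deleteEdges_adj.mp h).1)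
  · rw [w.support_eq_cons]; rfl
  · rw [List.getLast?_eq_getLast w.support_ne_nil, w.getLast_support]
  · rw [edges_disjoint_iff]
    intro k hk
    have hadjk := List.isChain_iff_getElem.mp w.isChain_adj_support k (by omega)
    exact (SimpleGraph.deleteEdges_adj.mp hadjk).2

end NSP
end
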